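/- arXiv:1102.4177 — 7 statements merged into one kernel-verified Lean document; each statement's English description precedes it below -/
import Mathlib

section
/- The cactus pseudo-distance on a pointed connected finite graph satisfies the triangle inequality: for all vertices v, v', v'', d_Cac(v, v'') ≤ d_Cac(v, v') + d_Cac(v', v''). -/
open SimpleGraph

/-- The maximum over all paths from `v` to `v'` of the minimum over vertices `a` on the
path of the graph distance `d_gr(ρ, a)`. -/
noncomputable def cacMaxMin {V : Type*} (G : SimpleGraph V) (ρ v v' : V) : ℕ :=
  sSup {m : ℕ | ∃ w : G.Walk v v', ∀ a ∈ w.support, m ≤ G.dist ρ a}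

/-- The cactus pseudo-distance of the pointed graph `(G, ρ)`. -/
noncomputable def dCac {V : Type*} (G : SimpleGraph V) (ρ v v' : V) : ℕ :=
  G.dist ρ v + G.dist ρ v' - 2 * cacMaxMin G ρ v v'

section aux

variable {V : Type*} (G : SimpleGraph V) (ρ v v' : V)

private def cacSet : Set ℕ := {m : ℕ | ∃ w : G.Walk v v', ∀ a ∈ w.support, m ≤ G.dist ρ a}

private lemma cacSet_bddAbove : BddAbove (cacSet G ρ v v') := by
  refine ⟨G.dist ρ v, fun m hm => ?_⟩
  obtain ⟨w, hw⟩ := hm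
  exact hw v w.start_mem_support

private lemma cacSet_nonempty (hG : G.Connected) : (cacSet G ρ v v').Nonempty :=
  ⟨0, (hG.preconnected v v').some, fun a _ => Nat.zero_le _⟩

private lemma cacMaxMin_mem (hG : G.Connected) : cacMaxMin G ρ v v' ∈ cacSet G ρ v v' :=
  Nat.sSup_mem (cacSet_nonempty G ρ v v' hG) (cacSet_bddAbove G ρ v v')

private lemma cacMaxMin_le_left (hG : G.Connected) : cacMaxMin G ρ v v' ≤ G.dist ρ v := by
  obtain ⟨w, hw⟩ := cacMaxMin_mem G ρ v v' hG
  exact hw v w.start_mem_support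

private lemma cacMaxMin_le_right (hG : G.Connected) : cacMaxMin G ρ v v' ≤ G.dist ρ v' := by
  obtain ⟨w, hw⟩ := cacMaxMin_mem G ρ v v' hG
  exact hw v' w.end_mem_support

private lemma min_le_cacMaxMin (hG : G.Connected) (v'' : V) :
    min (cacMaxMin G ρ v v') (cacMaxMin G ρ v' v'') ≤ cacMaxMin G ρ v v'' := by
  obtain ⟨w1, hw1⟩ := cacMaxMin_mem G ρ v v' hG
  obtain ⟨w2, hw2⟩ := cacMaxMin_mem G ρ v' v'' hG
  refine le_csSup (cacSet_bddAbove G ρ v v'') ⟨w1.append w2, fun a ha => ?_⟩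
  rw [SimpleGraph.Walk.mem_support_append_iff] at ha
  rcases ha with h | h
  · exact le_trans (min_le_left _ _) (hw1 a h)
  · exact le_trans (min_le_right _ _) (hw2 a h)

end aux

/-- The cactus pseudo-distance satisfies the triangle inequality. -/
theorem stmt0 {V : Type*} [Fintype V] (G : SimpleGraph V) (hG : G.Connected)
    (ρ v v' v'' : V) :
    dCac G ρ v v'' ≤ dCac G ρ v v' + dCac G ρ v' v'' := by
  have h1 := cacMaxMin_le_left G ρ v v' hG
  have h2 := cacMaxMin_le_right G ρ v v' hG
  have h3 := cacMaxMin_le_left G ρ v' v'' hG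
  have h4 := cacMaxMin_le_right G ρ v' v'' hG
  have h5 := min_le_cacMaxMin G ρ v v' hG v''
  rcases min_le_iff.mp (le_refl (min (cacMaxMin G ρ v v') (cacMaxMin G ρ v' v''))) with h | h <;>
    unfold dCac <;> omega
end

section
/- The continuous cactus pseudo-distance on a pointed compact geodesic metric space satisfies the triangle inequality and for all a, b: d_Kac(a, b) ≤ d(a, b) and d_Kac(ρ, a) = d(ρ, a). -/
/-- `E` is a geodesic space: any two points are joined by an isometric path. -/
def IsGeodesicSpace (E : Type*) [MetricSpace E] : Prop :=
  ∀ a b : E, ∃ γ : ℝ → E, γ 0 = a ∧ γ (dist a b) = b ∧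
    ∀ s ∈ Set.Icc (0 : ℝ) (dist a b), ∀ t ∈ Set.Icc (0 : ℝ) (dist a b),
      dist (γ s) (γ t) = |s - t|

/-- The continuous cactus pseudo-distance associated with the pointed space `(E, ρ)`:
`d_Kac(a, b) = d(ρ,a) + d(ρ,b) - 2 sup_γ inf_t d(ρ, γ(t))`, the supremum being over all
continuous curves `γ : [0,1] → E` from `a` to `b`. -/
noncomputable def dKac {E : Type*} [MetricSpace E] (ρ a b : E) : ℝ :=
  dist ρ a + dist ρ b -
    2 * sSup {m : ℝ | ∃ γ : ℝ → E, ContinuousOn γ (Set.Icc 0 1) ∧ γ 0 = a ∧ γ 1 = b ∧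
      m = ⨅ t : Set.Icc (0 : ℝ) 1, dist ρ (γ t)}

namespace KacAux

open Set

variable {E : Type*} [MetricSpace E]

/-- The set of minimal distances to `ρ` over continuous curves from `a` to `b`. -/
def kset (ρ a b : E) : Set ℝ :=
  {m : ℝ | ∃ γ : ℝ → E, ContinuousOn γ (Set.Icc 0 1) ∧ γ 0 = a ∧ γ 1 = b ∧
      m = ⨅ t : Set.Icc (0 : ℝ) 1, dist ρ (γ t)}

lemma dKac_eq (ρ a b : E) :
    dKac ρ a b = dist ρ a + dist ρ b - 2 * sSup (kset ρ a b) := rfl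

instance : Nonempty (Set.Icc (0:ℝ) 1) := ⟨⟨0, le_refl 0, by norm_num⟩⟩

lemma bddBelow_range (ρ : E) (γ : ℝ → E) :
    BddBelow (Set.range fun t : Set.Icc (0:ℝ) 1 => dist ρ (γ t)) :=
  ⟨0, by rintro x ⟨t, rfl⟩; exact dist_nonneg⟩

lemma iInf_nonneg' (ρ : E) (γ : ℝ → E) :
    0 ≤ ⨅ t : Set.Icc (0:ℝ) 1, dist ρ (γ t) :=
  le_ciInf fun _ => dist_nonneg

lemma mem_le_left {ρ a b : E} {m : ℝ} (hm : m ∈ kset ρ a b) : m ≤ dist ρ a := by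
  obtain ⟨γ, _, h0, _, rfl⟩ := hm
  have := ciInf_le (bddBelow_range ρ γ) (⟨0, le_refl 0, by norm_num⟩ : Set.Icc (0:ℝ) 1)
  simpa [h0] using this

lemma mem_le_right {ρ a b : E} {m : ℝ} (hm : m ∈ kset ρ a b) : m ≤ dist ρ b := by
  obtain ⟨γ, _, _, h1, rfl⟩ := hm
  have := ciInf_le (bddBelow_range ρ γ) (⟨1, by norm_num, le_refl 1⟩ : Set.Icc (0:ℝ) 1)
  simpa [h1] using this

lemma mem_nonneg {ρ a b : E} {m : ℝ} (hm : m ∈ kset ρ a b) : 0 ≤ m := by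
  obtain ⟨γ, _, _, _, rfl⟩ := hm
  exact iInf_nonneg' ρ γ

lemma bddAbove_kset (ρ a b : E) : BddAbove (kset ρ a b) :=
  ⟨dist ρ a, fun _ hm => mem_le_left hm⟩

/-- The geodesic yields an element of `kset` above `(d(ρ,a)+d(ρ,b)-d(a,b))/2`. -/
lemma exists_geo (hgeo : IsGeodesicSpace E) (ρ a b : E) :
    ∃ m ∈ kset ρ a b, (dist ρ a + dist ρ b - dist a b) / 2 ≤ m := by
  obtain ⟨γ0, h0, hL, hiso⟩ := hgeo a b
  set L := dist a b with hLdef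
  have hL0 : 0 ≤ L := dist_nonneg
  set γ : ℝ → E := fun t => γ0 (t * L) with hγ
  have hmem : ∀ t : ℝ, t ∈ Set.Icc (0:ℝ) 1 → t * L ∈ Set.Icc 0 L := by
    intro t ht
    exact ⟨mul_nonneg ht.1 hL0, mul_le_of_le_one_left hL0 ht.2⟩
  have hcont : ContinuousOn γ (Set.Icc 0 1) := by
    have : LipschitzOnWith (Real.toNNReal L) γ (Set.Icc 0 1) := by
      rw [lipschitzOnWith_iff_dist_le_mul]
      intro x hx y hy
      rw [hγ]
      simp only
      rw [hiso _ (hmem x hx) _ (hmem y hy)]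
      rw [Real.dist_eq, Real.coe_toNNReal _ hL0]
      rw [← sub_mul, abs_mul, abs_of_nonneg hL0]
      ring_nf
      exact le_refl _
    exact this.continuousOn
  refine ⟨⨅ t : Set.Icc (0:ℝ) 1, dist ρ (γ t), ⟨γ, hcont, ?_, ?_, rfl⟩, ?_⟩
  · simp [hγ, h0]
  · simp [hγ, hL]
  · apply le_ciInf
    rintro ⟨t, ht⟩
    have hu := hmem t ht
    have e1 : dist a (γ0 (t * L)) = t * L := by
      rw [← h0, hiso _ ⟨le_refl 0, hL0⟩ _ hu]
      rw [abs_of_nonpos (by linarith [hu.1])]; ring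
    have e2 : dist b (γ0 (t * L)) = L - t * L := by
      rw [← hL, hiso _ ⟨hL0, le_refl L⟩ _ hu]
      rw [abs_of_nonneg (by linarith [hu.2])]
    have t1 := dist_triangle ρ (γ0 (t * L)) a
    have t2 := dist_triangle ρ (γ0 (t * L)) b
    rw [dist_comm (γ0 (t*L)) a, e1] at t1
    rw [dist_comm (γ0 (t*L)) b, e2] at t2
    simp only [hγ]
    linarith

lemma kset_nonempty (hgeo : IsGeodesicSpace E) (ρ a b : E) : (kset ρ a b).Nonempty := by
  obtain ⟨m, hm, -⟩ := exists_geo hgeo ρ a b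
  exact ⟨m, hm⟩

/-- iInf over Icc 0 1 equals sInf of the image under `dist ρ` of the range of a path. -/
lemma iInf_path_eq (ρ : E) {x y : E} (p : Path x y) :
    (⨅ t : Set.Icc (0:ℝ) 1, dist ρ (p t)) = sInf (dist ρ '' Set.range p) := by
  rw [← sInf_range]
  congr 1
  rw [← Set.range_comp]
  rfl

/-- Concatenation of curves: the minimum belongs to `kset ρ a c`. -/
lemma min_mem_kset (ρ a b c : E) {m1 m2 : ℝ}
    (h1 : m1 ∈ kset ρ a b) (h2 : m2 ∈ kset ρ b c) :
    min m1 m2 ∈ kset ρ a c := by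
  obtain ⟨γ1, hc1, h10, h11, hm1⟩ := h1
  obtain ⟨γ2, hc2, h20, h21, hm2⟩ := h2
  have hcont1 : Continuous fun t : unitInterval => γ1 t := by
    exact continuousOn_iff_continuous_restrict.mp hc1
  have hcont2 : Continuous fun t : unitInterval => γ2 t := by
    exact continuousOn_iff_continuous_restrict.mp hc2
  set p1 : Path a b := ⟨⟨fun t : unitInterval => γ1 t, hcont1⟩, by simp [h10], by simp [h11]⟩
  set p2 : Path b c := ⟨⟨fun t : unitInterval => γ2 t, hcont2⟩, by simp [h20], by simp [h21]⟩
  set p := p1.trans p2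
  refine ⟨p.extend, p.continuous_extend.continuousOn, by simp, by simp, ?_⟩
  have key : (⨅ t : Set.Icc (0:ℝ) 1, dist ρ (p.extend t)) =
      ⨅ t : Set.Icc (0:ℝ) 1, dist ρ (p t) := by
    apply iInf_congr
    intro t
    rw [p.extend_apply t.2]
  rw [key, iInf_path_eq, Path.trans_range, Set.image_union]
  have hne1 : (dist ρ '' Set.range p1).Nonempty := (Set.range_nonempty _).image _
  have hne2 : (dist ρ '' Set.range p2).Nonempty := (Set.range_nonempty _).image _
  have hbb1 : BddBelow (dist ρ '' Set.range p1) := ⟨0, by rintro x ⟨y, -, rfl⟩; exact dist_nonneg⟩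
  have hbb2 : BddBelow (dist ρ '' Set.range p2) := ⟨0, by rintro x ⟨y, -, rfl⟩; exact dist_nonneg⟩
  rw [csInf_union hbb1 hne1 hbb2 hne2]
  have e1 : sInf (dist ρ '' Set.range p1) = m1 := by
    rw [hm1]; exact (iInf_path_eq ρ p1).symm
  have e2 : sInf (dist ρ '' Set.range p2) = m2 := by
    rw [hm2]; exact (iInf_path_eq ρ p2).symm
  rw [e1, e2]

end KacAux

/-- The continuous cactus pseudo-distance on a pointed compact geodesic metric space
satisfies the triangle inequality, is bounded above by the distance, and agrees with the
distance from the distinguished point. -/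
theorem stmt7 {E : Type*} [MetricSpace E] [CompactSpace E]
    (hgeo : IsGeodesicSpace E) (ρ : E) :
    (∀ a b c : E, dKac ρ a c ≤ dKac ρ a b + dKac ρ b c) ∧
    (∀ a b : E, dKac ρ a b ≤ dist a b) ∧
    (∀ a : E, dKac ρ ρ a = dist ρ a) := by
  open KacAux in
  refine ⟨?_, ?_, ?_⟩
  · -- triangle inequality
    intro a b c
    have key : sSup (kset ρ a b) + sSup (kset ρ b c) ≤ dist ρ b + sSup (kset ρ a c) := by
      have h1 : sSup (kset ρ a b) ≤ dist ρ b + sSup (kset ρ a c) - sSup (kset ρ b c) := by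
        apply csSup_le (kset_nonempty hgeo ρ a b)
        intro m1 hm1
        have h2 : sSup (kset ρ b c) ≤ dist ρ b + sSup (kset ρ a c) - m1 := by
          apply csSup_le (kset_nonempty hgeo ρ b c)
          intro m2 hm2
          have hmin : min m1 m2 ≤ sSup (kset ρ a c) :=
            le_csSup (bddAbove_kset ρ a c) (min_mem_kset ρ a b c hm1 hm2)
          have hb1 : m1 ≤ dist ρ b := mem_le_right hm1
          have hb2 : m2 ≤ dist ρ b := mem_le_left hm2
          rcases le_total m1 m2 with h | h
          · rw [min_eq_left h] at hmin; linarith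
          · rw [min_eq_right h] at hmin; linarith
        linarith
      linarith
    rw [dKac_eq, dKac_eq, dKac_eq]
    linarith
  · -- bounded by the distance
    intro a b
    obtain ⟨m, hm, hge⟩ := exists_geo hgeo ρ a b
    have hle : m ≤ sSup (kset ρ a b) := le_csSup (bddAbove_kset ρ a b) hm
    rw [dKac_eq]
    linarith
  · -- distance from the root
    intro a
    have h0 : sSup (kset ρ ρ a) = 0 := by
      apply le_antisymm
      · apply csSup_le (kset_nonempty hgeo ρ ρ a)
        intro m hm
        have := mem_le_left hm
        simpa using this
      · obtain ⟨m, hm, -⟩ := exists_geo hgeo ρ ρ a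
        have h1 : m ≤ 0 := by simpa using mem_le_left hm
        have h2 : 0 ≤ m := mem_nonneg hm
        have : m = 0 := le_antisymm h1 h2
        rw [← this]
        exact le_csSup (bddAbove_kset ρ ρ a) hm
    rw [dKac_eq, h0]
    simp
end

section
/- The continuous cactus construction is 6-Lipschitz with respect to the Gromov-Hausdorff distance: for any two pointed compact geodesic metric spaces E and E', d_GH(Kac(E), Kac(E')) ≤ 6·d_GH(E, E'). -/
/-- A correspondence between the pointed sets `(X, ρ)` and `(Y, ρ')`. -/
def IsCorrespondence {X Y : Type*} (ρ : X) (ρ' : Y) (R : Set (X × Y)) : Prop :=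
  (ρ, ρ') ∈ R ∧ (∀ x : X, ∃ y : Y, (x, y) ∈ R) ∧ (∀ y : Y, ∃ x : X, (x, y) ∈ R)

/-- The distortion of a correspondence `R` with respect to the (pseudo-)distances
`dX` and `dY`. -/
noncomputable def distortion {X Y : Type*} (dX : X → X → ℝ) (dY : Y → Y → ℝ)
    (R : Set (X × Y)) : ℝ :=
  sSup {r : ℝ | ∃ p ∈ R, ∃ q ∈ R, r = |dX p.1 q.1 - dY p.2 q.2|}

/-- The pointed Gromov–Hausdorff distance between the quotient metric spaces of the
pseudo-distances `dX`, `dY`, expressed as half the infimum of distortions of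
correspondences containing the pair of base points. -/
noncomputable def ghDistCorr {X Y : Type*} (dX : X → X → ℝ) (dY : Y → Y → ℝ)
    (ρ : X) (ρ' : Y) : ℝ :=
  sInf {D : ℝ | ∃ R : Set (X × Y), IsCorrespondence ρ ρ' R ∧ D = distortion dX dY R} / 2

open Set

/-- From a geodesic space structure, a globally continuous curve from `a` to `b`
parametrized on `[0,1]`, staying within `dist a b` of `a`. -/
lemma geodesic_curve {E : Type*} [MetricSpace E] (hgeo : IsGeodesicSpace E) (a b : E) :
    ∃ γ : ℝ → E, Continuous γ ∧ γ 0 = a ∧ γ 1 = b ∧ ∀ t, dist (γ t) a ≤ dist a b := by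
  obtain ⟨g, hg0, hgd, hiso⟩ := hgeo a b
  set d := dist a b with hd
  have hd0 : 0 ≤ d := dist_nonneg
  set φ : ℝ → ℝ := fun t => min (max (d * t) 0) d with hφ
  have hφmem : ∀ t, φ t ∈ Icc 0 d := fun t =>
    ⟨le_min (le_max_right _ _) hd0, min_le_right _ _⟩
  have hgc : ContinuousOn g (Icc 0 d) := by
    have : LipschitzOnWith 1 g (Icc 0 d) := by
      apply LipschitzOnWith.of_dist_le_mul
      intro x hx y hy
      rw [hiso x hx y hy, Real.dist_eq]
      simp
    exact this.continuousOn
  have hφc : Continuous φ := by continuity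
  refine ⟨g ∘ φ, hgc.comp_continuous hφc hφmem, ?_, ?_, ?_⟩
  · show g (φ 0) = a
    have : φ 0 = 0 := by simp [hφ, hd0]
    rw [this, hg0]
  · show g (φ 1) = b
    have : φ 1 = d := by simp [hφ, hd0]
    rw [this, hgd]
  · intro t
    have h0mem : (0:ℝ) ∈ Icc 0 d := ⟨le_refl _, hd0⟩
    have : dist (g (φ t)) (g 0) = |φ t - 0| := hiso _ (hφmem t) 0 h0mem
    rw [← hg0]
    show dist (g (φ t)) (g 0) ≤ d
    rw [this, sub_zero, abs_of_nonneg (hφmem t).1]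
    exact (hφmem t).2

/-- Concatenation of two continuous curves. -/
lemma concat_curve {E : Type*} [MetricSpace E] (γ₁ γ₂ : ℝ → E) (h₁ : Continuous γ₁)
    (h₂ : Continuous γ₂) (hj : γ₁ 1 = γ₂ 0) :
    ∃ γ : ℝ → E, Continuous γ ∧ γ 0 = γ₁ 0 ∧ γ 1 = γ₂ 1 ∧
      ∀ t ∈ Icc (0:ℝ) 1, (∃ s ∈ Icc (0:ℝ) 1, γ t = γ₁ s) ∨ ∃ s ∈ Icc (0:ℝ) 1, γ t = γ₂ s := by
  classical
  refine ⟨fun t => if t ≤ 1/2 then γ₁ (2*t) else γ₂ (2*t - 1), ?_, ?_, ?_, ?_⟩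
  · apply Continuous.if_le (h₁.comp (by continuity)) (h₂.comp (by continuity))
      continuous_id continuous_const
    intro x hx
    simp only [id] at hx
    subst hx
    norm_num [hj]
  · norm_num
  · norm_num
  · intro t ht
    by_cases h : t ≤ 1/2
    · left
      exact ⟨2*t, ⟨by linarith [ht.1], by linarith⟩, by simp only [if_pos h]⟩
    · right
      push_neg at h
      exact ⟨2*t - 1, ⟨by linarith, by linarith [ht.2]⟩, by simp only [if_neg (not_le.mpr h)]⟩

/-- A chain of points with consecutive distances `≤ C` can be joined by a continuous
curve staying within `C` of the chain. -/
lemma chain_curve {E : Type*} [MetricSpace E] (hgeo : IsGeodesicSpace E)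
    (y : ℕ → E) (C : ℝ) (hC : 0 ≤ C) :
    ∀ n : ℕ, (∀ i < n, dist (y i) (y (i+1)) ≤ C) →
    ∃ γ : ℝ → E, Continuous γ ∧ γ 0 = y 0 ∧ γ 1 = y n ∧
      ∀ t ∈ Icc (0:ℝ) 1, ∃ i ≤ n, dist (γ t) (y i) ≤ C := by
  intro n
  induction n with
  | zero =>
    intro _
    exact ⟨fun _ => y 0, continuous_const, rfl, rfl,
      fun t _ => ⟨0, le_refl 0, by simp [hC]⟩⟩
  | succ n ih =>
    intro h
    obtain ⟨γ₁, hc₁, h10, h11, hprop₁⟩ := ih (fun i hi => h i (Nat.lt_succ_of_lt hi))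
    obtain ⟨γ₂, hc₂, h20, h21, hprop₂⟩ := geodesic_curve hgeo (y n) (y (n+1))
    obtain ⟨γ, hc, hg0, hg1, hprop⟩ := concat_curve γ₁ γ₂ hc₁ hc₂ (by rw [h11, h20])
    refine ⟨γ, hc, by rw [hg0, h10], by rw [hg1, h21], ?_⟩
    intro t ht
    rcases hprop t ht with ⟨s, hs, he⟩ | ⟨s, hs, he⟩
    · obtain ⟨i, hi, hd⟩ := hprop₁ s hs
      exact ⟨i, hi.trans (Nat.le_succ n), by rw [he]; exact hd⟩
    · refine ⟨n, Nat.le_succ n, ?_⟩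
      rw [he, ← h20]
      calc dist (γ₂ s) (γ₂ 0) ≤ dist (y n) (y (n+1)) := by rw [h20]; exact hprop₂ s
        _ ≤ C := h n (Nat.lt_succ_self n)

/-- Key comparison lemma: across a relation of distortion at most `ε`, the cactus
pseudo-distance increases by at most `6 ε`. -/
lemma dKac_le {E E' : Type*} [MetricSpace E] [CompactSpace E] [MetricSpace E'] [CompactSpace E']
    (hgeo : IsGeodesicSpace E) (hgeo' : IsGeodesicSpace E')
    (ρ a b : E) (ρ' a' b' : E') (r : E → E' → Prop) (ε : ℝ)
    (hρ : r ρ ρ') (ha : r a a') (hb : r b b')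
    (htot' : ∀ y : E', ∃ x : E, r x y)
    (hdis : ∀ x u y v, r x y → r u v → |dist x u - dist y v| ≤ ε) :
    dKac ρ a b ≤ dKac ρ' a' b' + 6 * ε := by
  classical
  have hε : 0 ≤ ε := by
    have := hdis ρ ρ ρ' ρ' hρ hρ
    simpa using this
  set M : Set ℝ := {m : ℝ | ∃ γ : ℝ → E, ContinuousOn γ (Set.Icc 0 1) ∧ γ 0 = a ∧ γ 1 = b ∧
      m = ⨅ t : Set.Icc (0 : ℝ) 1, dist ρ (γ t)} with hM
  set M' : Set ℝ := {m : ℝ | ∃ γ : ℝ → E', ContinuousOn γ (Set.Icc 0 1) ∧ γ 0 = a' ∧ γ 1 = b' ∧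
      m = ⨅ t : Set.Icc (0 : ℝ) 1, dist ρ' (γ t)} with hM'
  have hM'ne : M'.Nonempty := by
    obtain ⟨γ, hc, h0, h1, _⟩ := geodesic_curve hgeo' a' b'
    exact ⟨_, γ, hc.continuousOn, h0, h1, rfl⟩
  have hbb : ∀ (γ : ℝ → E'), BddBelow (Set.range fun t : Set.Icc (0:ℝ) 1 => dist ρ' (γ t)) :=
    fun γ => ⟨0, by rintro z ⟨t, rfl⟩; exact dist_nonneg⟩
  have hbbE : ∀ (γ : ℝ → E), BddBelow (Set.range fun t : Set.Icc (0:ℝ) 1 => dist ρ (γ t)) :=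
    fun γ => ⟨0, by rintro z ⟨t, rfl⟩; exact dist_nonneg⟩
  have hMbdd : BddAbove M := by
    refine ⟨dist ρ a, ?_⟩
    rintro m ⟨γ, hc, h0, h1, rfl⟩
    have := ciInf_le (hbbE γ) ⟨0, by norm_num, by norm_num⟩
    simpa [h0] using this
  have hsup : sSup M' ≤ sSup M + 2 * ε := by
    apply csSup_le hM'ne
    rintro m ⟨γ, hγc, hγ0, hγ1, rfl⟩
    set m := ⨅ t : Set.Icc (0 : ℝ) 1, dist ρ' (γ t) with hmdef
    apply le_of_forall_pos_le_add
    intro δ hδ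
    -- uniform continuity of γ on [0,1]
    have hUC := (isCompact_Icc (a := (0:ℝ)) (b := 1)).uniformContinuousOn_of_continuous hγc
    rw [Metric.uniformContinuousOn_iff] at hUC
    obtain ⟨δ₀, hδ₀, hUC⟩ := hUC δ hδ
    obtain ⟨n, hn⟩ := exists_nat_one_div_lt hδ₀
    set N : ℕ := n + 1 with hN
    have hN0 : (N:ℝ) ≠ 0 := by positivity
    have hNpos : (0:ℝ) < N := by positivity
    set x : ℕ → E' := fun i => γ ((i:ℝ) / N) with hx
    have hxmem : ∀ i ≤ N, ((i:ℝ) / N) ∈ Icc (0:ℝ) 1 := by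
      intro i hi
      constructor
      · positivity
      · rw [div_le_one hNpos]
        exact_mod_cast hi
    have hx0 : x 0 = a' := by simp [hx, hγ0]
    have hxN : x N = b' := by
      have : ((N:ℝ)) / N = 1 := div_self hN0
      simp [hx, this, hγ1]
    set p : ℕ → E := fun i => if i = 0 then a else if i = N then b
      else Classical.choose (htot' (x i)) with hp
    have hNne0 : N ≠ 0 := Nat.succ_ne_zero n
    have hp0 : p 0 = a := by simp [hp]
    have hpN : p N = b := by simp [hp, hNne0]
    have hr : ∀ i, i ≤ N → r (p i) (x i) := by
      intro i hi
      by_cases h0 : i = 0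
      · subst h0; rw [hx0, hp0]; exact ha
      · by_cases hN' : i = N
        · subst hN'; rw [hxN, hpN]; exact hb
        · have : p i = Classical.choose (htot' (x i)) := by simp [hp, h0, hN']
          rw [this]
          exact Classical.choose_spec (htot' (x i))
    have hm_le : ∀ i, i ≤ N → m ≤ dist ρ' (x i) := by
      intro i hi
      exact ciInf_le (hbb γ) ⟨(i:ℝ)/N, hxmem i hi⟩
    have hxcons : ∀ i, i < N → dist (x i) (x (i+1)) < δ := by
      intro i hi
      apply hUC _ (hxmem i hi.le) _ (hxmem (i+1) hi)
      rw [Real.dist_eq]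
      have heq : (i:ℝ)/N - ((i:ℝ)+1)/N = -(1/N) := by ring
      have hcast : ((i+1 : ℕ) : ℝ) = (i:ℝ) + 1 := by push_cast; ring
      rw [hcast, heq, abs_neg, abs_of_pos (by positivity)]
      have hNn : (N:ℝ) = (n:ℝ) + 1 := by rw [hN]; push_cast; ring
      rw [hNn]
      exact hn
    have hpcons : ∀ i, i < N → dist (p i) (p (i+1)) ≤ δ + ε := by
      intro i hi
      have h1 := hdis (p i) (p (i+1)) (x i) (x (i+1)) (hr i hi.le) (hr (i+1) hi)
      rw [abs_le] at h1
      have := hxcons i hi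
      linarith [h1.2]
    obtain ⟨γ', hγ'c, hγ'0, hγ'1, hγ'prop⟩ :=
      chain_curve hgeo p (δ + ε) (by linarith) N hpcons
    have hlow : ∀ t : Set.Icc (0:ℝ) 1, m - 2*ε - δ ≤ dist ρ (γ' t) := by
      intro t
      obtain ⟨i, hi, hdγ⟩ := hγ'prop t t.2
      have h2 := hdis ρ (p i) ρ' (x i) hρ (hr i hi)
      rw [abs_le] at h2
      have h3 : dist ρ (p i) ≤ dist ρ (γ' ↑t) + dist (γ' ↑t) (p i) :=
        dist_triangle ρ (γ' ↑t) (p i)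
      have h4 := hm_le i hi
      linarith [h2.1]
    have hm'mem : (⨅ t : Set.Icc (0:ℝ) 1, dist ρ (γ' t)) ∈ M := by
      exact ⟨γ', hγ'c.continuousOn, by rw [hγ'0, hp0], by rw [hγ'1, hpN], rfl⟩
    have hm'low : m - 2*ε - δ ≤ ⨅ t : Set.Icc (0:ℝ) 1, dist ρ (γ' t) := le_ciInf hlow
    have := le_csSup hMbdd hm'mem
    linarith
  have hd1 := hdis ρ a ρ' a' hρ ha
  have hd2 := hdis ρ b ρ' b' hρ hb
  rw [abs_le] at hd1 hd2
  show dist ρ a + dist ρ b - 2 * sSup M ≤ (dist ρ' a' + dist ρ' b' - 2 * sSup M') + 6 * ε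
  linarith [hd1.2, hd2.2]

/-- The continuous cactus is 6-Lipschitz for the pointed Gromov–Hausdorff distance:
`d_GH(Kac(E), Kac(E')) ≤ 6 d_GH(E, E')`, where the Gromov–Hausdorff distances are
expressed via correspondences and the cactus spaces via their pseudo-distances. -/
theorem stmt8 {E E' : Type*} [MetricSpace E] [CompactSpace E]
    [MetricSpace E'] [CompactSpace E']
    (hgeo : IsGeodesicSpace E) (hgeo' : IsGeodesicSpace E') (ρ : E) (ρ' : E') :
    ghDistCorr (dKac ρ) (dKac ρ') ρ ρ' ≤
      6 * ghDistCorr (fun a b : E => dist a b) (fun a b : E' => dist a b) ρ ρ' := by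
  classical
  set A : Set ℝ := {D : ℝ | ∃ R : Set (E × E'), IsCorrespondence ρ ρ' R ∧
      D = distortion (dKac ρ) (dKac ρ') R} with hA
  set B : Set ℝ := {D : ℝ | ∃ R : Set (E × E'), IsCorrespondence ρ ρ' R ∧
      D = distortion (fun a b : E => dist a b) (fun a b : E' => dist a b) R} with hB
  have hA0 : ∀ D ∈ A, 0 ≤ D := by
    rintro D ⟨R, hR, rfl⟩
    apply Real.sSup_nonneg
    rintro z ⟨p, hp, q, hq, rfl⟩
    exact abs_nonneg _
  have hAbdd : BddBelow A := ⟨0, hA0⟩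
  -- bound for the distance distortion set
  have hEbd : Bornology.IsBounded (Set.univ : Set E) := isCompact_univ.isBounded
  have hE'bd : Bornology.IsBounded (Set.univ : Set E') := isCompact_univ.isBounded
  have key : ∀ D ∈ B, sInf A ≤ 6 * D := by
    rintro D ⟨R, hR, rfl⟩
    set ε := distortion (fun a b : E => dist a b) (fun a b : E' => dist a b) R with hεdef
    have hRne : ((ρ, ρ') : E × E') ∈ R := hR.1
    have hdistbdd : BddAbove {z : ℝ | ∃ p ∈ R, ∃ q ∈ R,
        z = |dist p.1 q.1 - dist p.2 q.2|} := by
      refine ⟨Metric.diam (Set.univ : Set E) + Metric.diam (Set.univ : Set E'), ?_⟩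
      rintro z ⟨p, hp, q, hq, rfl⟩
      have h1 : dist p.1 q.1 ≤ Metric.diam (Set.univ : Set E) :=
        Metric.dist_le_diam_of_mem hEbd (Set.mem_univ _) (Set.mem_univ _)
      have h2 : dist p.2 q.2 ≤ Metric.diam (Set.univ : Set E') :=
        Metric.dist_le_diam_of_mem hE'bd (Set.mem_univ _) (Set.mem_univ _)
      rw [abs_le]
      constructor <;> [skip; skip] <;>
        · have := dist_nonneg (x := p.1) (y := q.1)
          have := dist_nonneg (x := p.2) (y := q.2)
          first
          | linarith
    have hdis : ∀ x u (y : E') v, (x, y) ∈ R → (u, v) ∈ R →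
        |dist x u - dist y v| ≤ ε := by
      intro x u y v hxy huv
      exact le_csSup hdistbdd ⟨(x, y), hxy, (u, v), huv, rfl⟩
    have hdis' : ∀ (y : E') (v : E') (x : E) (u : E), (fun y x => (x, y) ∈ R) y x →
        (fun y x => (x, y) ∈ R) v u → |dist y v - dist x u| ≤ ε := by
      intro y v x u hxy huv
      rw [abs_sub_comm]
      exact hdis x u y v hxy huv
    have hdistor : distortion (dKac ρ) (dKac ρ') R ≤ 6 * ε := by
      have hne : {z : ℝ | ∃ p ∈ R, ∃ q ∈ R,
          z = |dKac ρ p.1 q.1 - dKac ρ' p.2 q.2|}.Nonempty :=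
        ⟨_, (ρ, ρ'), hRne, (ρ, ρ'), hRne, rfl⟩
      apply csSup_le hne
      rintro z ⟨p, hp, q, hq, rfl⟩
      rw [abs_le]
      constructor
      · have := dKac_le hgeo' hgeo ρ' p.2 q.2 ρ p.1 q.1 (fun y x => (x, y) ∈ R) ε
          hRne (by simpa using hp) (by simpa using hq) hR.2.1 hdis'
        linarith
      · have := dKac_le hgeo hgeo' ρ p.1 q.1 ρ' p.2 q.2 (fun x y => (x, y) ∈ R) ε
          hRne (by simpa using hp) (by simpa using hq) hR.2.2 hdis
        linarith
    have hmem : distortion (dKac ρ) (dKac ρ') R ∈ A := ⟨R, hR, rfl⟩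
    calc sInf A ≤ distortion (dKac ρ) (dKac ρ') R := csInf_le hAbdd hmem
      _ ≤ 6 * ε := hdistor
  have hBne : B.Nonempty := by
    refine ⟨_, Set.univ, ⟨Set.mem_univ _, fun x => ⟨ρ', Set.mem_univ _⟩,
      fun y => ⟨ρ, Set.mem_univ _⟩⟩, rfl⟩
  have hfinal : sInf A ≤ 6 * sInf B := by
    have h6 : sInf A / 6 ≤ sInf B := by
      apply le_csInf hBne
      intro D hD
      have := key D hD
      linarith
    linarith
  show sInf A / 2 ≤ 6 * (sInf B / 2)
  linarith
end

section
/- If R is a correspondence between pointed compact geodesic metric spaces E and E' with distortion D, then the induced correspondence between Kac(E) and Kac(E') (pairing classes that admit R-related representatives) has distortion at most 6D. -/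
open Set

noncomputable def Mset {E : Type*} [MetricSpace E] (ρ a b : E) : Set ℝ :=
  {m : ℝ | ∃ γ : ℝ → E, ContinuousOn γ (Set.Icc 0 1) ∧ γ 0 = a ∧ γ 1 = b ∧
      m = ⨅ t : Set.Icc (0 : ℝ) 1, dist ρ (γ t)}

noncomputable def pathFun {E : Type*} [TopologicalSpace E] {a b : E} (p : Path a b) : ℝ → E :=
  fun t => p (Set.projIcc 0 1 zero_le_one t)

lemma pathFun_cont {E : Type*} [TopologicalSpace E] {a b : E} (p : Path a b) :
    Continuous (pathFun p) :=
  p.continuous.comp continuous_projIcc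

lemma pathFun_zero {E : Type*} [TopologicalSpace E] {a b : E} (p : Path a b) :
    pathFun p 0 = a := by
  simp [pathFun, Set.projIcc_left]

lemma pathFun_one {E : Type*} [TopologicalSpace E] {a b : E} (p : Path a b) :
    pathFun p 1 = b := by
  simp [pathFun, Set.projIcc_right]

lemma pathFun_mem {E : Type*} [TopologicalSpace E] {a b : E} (p : Path a b)
    {t : ℝ} (ht : t ∈ Set.Icc (0:ℝ) 1) : pathFun p t = p ⟨t, ht⟩ := by
  rw [pathFun, Set.projIcc_of_mem zero_le_one ht]

lemma bddBelow_distRange {E : Type*} [MetricSpace E] (ρ : E) (γ : ℝ → E) :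
    BddBelow (Set.range fun t : Set.Icc (0:ℝ) 1 => dist ρ (γ t)) :=
  ⟨0, by rintro x ⟨t, rfl⟩; exact dist_nonneg⟩

lemma mem_Mset_of_path {E : Type*} [MetricSpace E] (ρ : E) {a b : E} (p : Path a b) :
    (⨅ t : Set.Icc (0:ℝ) 1, dist ρ (pathFun p t)) ∈ Mset ρ a b :=
  ⟨pathFun p, (pathFun_cont p).continuousOn, pathFun_zero p, pathFun_one p, rfl⟩

lemma seg_path {E : Type*} [MetricSpace E] (hgeo : IsGeodesicSpace E) (ρ x y : E) :
    ∃ p : Path x y, ∀ s : unitInterval,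
      min (dist ρ x) (dist ρ y) - dist x y / 2 ≤ dist ρ (p s) := by
  obtain ⟨γ, h0, h1, hiso⟩ := hgeo x y
  set L := dist x y with hL
  have hL0 : 0 ≤ L := dist_nonneg
  have hcont : ContinuousOn γ (Icc 0 L) := by
    have : LipschitzOnWith 1 γ (Icc 0 L) := by
      rw [lipschitzOnWith_iff_dist_le_mul]
      intro s hs t ht
      rw [hiso s hs t ht, Real.dist_eq, NNReal.coe_one, one_mul]
    exact this.continuousOn
  have hmem : ∀ s : unitInterval, (s : ℝ) * L ∈ Icc 0 L := by
    intro s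
    constructor
    · exact mul_nonneg s.2.1 hL0
    · calc (s:ℝ) * L ≤ 1 * L := by apply mul_le_mul_of_nonneg_right s.2.2 hL0
        _ = L := one_mul L
  refine ⟨⟨⟨fun s => γ ((s : ℝ) * L), ?_⟩, ?_, ?_⟩, ?_⟩
  · exact hcont.comp_continuous (continuous_subtype_val.mul continuous_const) hmem
  · simp [h0]
  · simp [h1]
  · intro s
    set u := (s : ℝ) * L with hu
    have hum := hmem s
    show min (dist ρ x) (dist ρ y) - dist x y / 2 ≤ dist ρ (γ u)
    rw [← hL]
    rcases le_or_gt u (L / 2) with h | h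
    · have hdx : dist (γ u) x ≤ L / 2 := by
        rw [← h0, hiso u hum 0 ⟨le_refl 0, hL0⟩]
        rw [sub_zero, abs_of_nonneg hum.1]
        exact h
      have : dist ρ x ≤ dist ρ (γ u) + dist (γ u) x := dist_triangle _ _ _
      have h2 : min (dist ρ x) (dist ρ y) ≤ dist ρ x := min_le_left _ _
      linarith
    · have hdy : dist (γ u) y ≤ L / 2 := by
        rw [← h1, hiso u hum L ⟨hL0, le_refl L⟩]
        rw [abs_of_nonpos (by linarith [hum.2])]
        linarith
      have : dist ρ y ≤ dist ρ (γ u) + dist (γ u) y := dist_triangle _ _ _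
      have h2 : min (dist ρ x) (dist ρ y) ≤ dist ρ y := min_le_right _ _
      linarith

lemma chain_path {E : Type*} [MetricSpace E] (hgeo : IsGeodesicSpace E) (ρ : E) (c : ℝ) :
    ∀ (n : ℕ) (y : ℕ → E), c ≤ dist ρ (y 0) →
      (∀ i < n, c ≤ min (dist ρ (y i)) (dist ρ (y (i+1))) - dist (y i) (y (i+1)) / 2) →
      ∃ p : Path (y 0) (y n), ∀ s : unitInterval, c ≤ dist ρ (p s) := by
  intro n
  induction n with
  | zero =>
    intro y h0 _
    exact ⟨Path.refl (y 0), fun s => h0⟩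
  | succ n ih =>
    intro y h0 hseg
    obtain ⟨p, hp⟩ := ih y h0 (fun i hi => hseg i (Nat.lt_succ_of_lt hi))
    obtain ⟨q, hq⟩ := seg_path hgeo ρ (y n) (y (n+1))
    refine ⟨p.trans q, fun s => ?_⟩
    have hmem : (p.trans q) s ∈ Set.range (p.trans q) := ⟨s, rfl⟩
    rw [Path.trans_range] at hmem
    rcases hmem with ⟨t, ht⟩ | ⟨t, ht⟩
    · rw [← ht]; exact hp t
    · rw [← ht]
      exact le_trans (hseg n (Nat.lt_succ_self n)) (hq t)

lemma Mset_nonneg {E : Type*} [MetricSpace E] {ρ a b : E} {m : ℝ} (hm : m ∈ Mset ρ a b) :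
    0 ≤ m := by
  obtain ⟨γ, _, _, _, rfl⟩ := hm
  exact le_ciInf fun t => dist_nonneg

lemma Mset_bddAbove {E : Type*} [MetricSpace E] (ρ a b : E) : BddAbove (Mset ρ a b) := by
  refine ⟨dist ρ a, ?_⟩
  rintro m ⟨γ, hc, h0, h1, rfl⟩
  have := ciInf_le (bddBelow_distRange ρ γ) (⟨0, le_refl 0, zero_le_one⟩ : Set.Icc (0:ℝ) 1)
  rwa [h0] at this

lemma Mset_nonempty {E : Type*} [MetricSpace E] (hgeo : IsGeodesicSpace E) (ρ a b : E) :
    (Mset ρ a b).Nonempty := by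
  obtain ⟨p, _⟩ := seg_path hgeo ρ a b
  exact ⟨_, mem_Mset_of_path ρ p⟩

lemma key {E E' : Type*} [MetricSpace E] [MetricSpace E']
    (hgeo' : IsGeodesicSpace E') (ρ : E) (ρ' : E') (R : Set (E × E'))
    (hsurj : ∀ x : E, ∃ y, (x, y) ∈ R) (D : ℝ) (hD0 : 0 ≤ D)
    (hbd : ∀ p ∈ R, ∀ q ∈ R, |dist p.1 q.1 - dist p.2 q.2| ≤ D)
    (hρ : (ρ, ρ') ∈ R)
    {a b : E} {a' b' : E'} (ha : (a, a') ∈ R) (hb : (b, b') ∈ R) :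
    sSup (Mset ρ a b) ≤ sSup (Mset ρ' a' b') + 2 * D := by
  have hne' := Mset_nonempty hgeo' ρ' a' b'
  have hbdd' := Mset_bddAbove ρ' a' b'
  have hS'0 : 0 ≤ sSup (Mset ρ' a' b') :=
    hne'.elim fun m hm => le_trans (Mset_nonneg hm) (le_csSup hbdd' hm)
  apply Real.sSup_le _ (by linarith)
  rintro m ⟨γ, hγc, hγ0, hγ1, hm⟩
  refine le_of_forall_pos_le_add ?_
  intro ε hε
  have huc := (isCompact_Icc.uniformContinuousOn_of_continuous hγc)
  rw [Metric.uniformContinuousOn_iff] at huc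
  obtain ⟨δ, hδ, hδa⟩ := huc ε hε
  obtain ⟨n₀, hn⟩ := exists_nat_one_div_lt hδ
  obtain ⟨n, hn0, hnpos, hnδ⟩ : ∃ n : ℕ, n ≠ 0 ∧ (0:ℝ) < (n:ℝ) ∧ 1 / (n:ℝ) < δ :=
    ⟨n₀ + 1, Nat.succ_ne_zero _, by positivity, by push_cast; exact hn⟩
  set y : ℕ → E' := fun i =>
    if i = 0 then a' else if n ≤ i then b'
    else Classical.choose (hsurj (γ ((i:ℝ) / (n:ℝ)))) with hydef
  have hy0 : y 0 = a' := by simp [hydef]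
  have hyn : y n = b' := by simp [hydef, hn0]
  have hy : ∀ i ≤ n, (γ ((i:ℝ) / (n:ℝ)), y i) ∈ R := by
    intro i hi
    by_cases h0 : i = 0
    · subst h0
      have : ((0:ℕ):ℝ) / (n:ℝ) = 0 := by norm_num
      rw [this, hγ0, hy0]
      exact ha
    · by_cases hni : n ≤ i
      · have hin : i = n := le_antisymm hi hni
        rw [hin, div_self (ne_of_gt hnpos), hγ1, hyn]
        exact hb
      · have : y i = Classical.choose (hsurj (γ ((i:ℝ) / (n:ℝ)))) := by
          simp [hydef, h0, hni]
        rw [this]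
        exact Classical.choose_spec (hsurj (γ ((i:ℝ) / (n:ℝ))))
  have hmemI : ∀ i ≤ n, (i:ℝ) / (n:ℝ) ∈ Icc (0:ℝ) 1 := by
    intro i hi
    constructor
    · positivity
    · rw [div_le_one hnpos]
      exact_mod_cast hi
  have hml : ∀ i ≤ n, m ≤ dist ρ (γ ((i:ℝ) / (n:ℝ))) := by
    intro i hi
    rw [hm]
    exact ciInf_le (bddBelow_distRange ρ γ) (⟨_, hmemI i hi⟩ : Set.Icc (0:ℝ) 1)
  have hyρ : ∀ i ≤ n, m - D ≤ dist ρ' (y i) := by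
    intro i hi
    have h1 := hbd _ hρ _ (hy i hi)
    simp only at h1
    have h2 := abs_le.mp h1
    have := hml i hi
    linarith [h2.1, h2.2]
  have hstep : ∀ i < n, dist (y i) (y (i+1)) ≤ ε + D := by
    intro i hi
    have hi1 : i + 1 ≤ n := hi
    have hγd : dist (γ ((i:ℝ) / (n:ℝ))) (γ (((i+1:ℕ):ℝ) / (n:ℝ))) < ε := by
      apply hδa _ (hmemI i (le_of_lt hi)) _ (hmemI (i+1) hi1)
      have harg : ((i+1:ℕ):ℝ) = (i:ℝ) + 1 := by push_cast; ring
      rw [Real.dist_eq, harg,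
        show (i:ℝ)/(n:ℝ) - ((i:ℝ)+1)/(n:ℝ) = -(1/(n:ℝ)) from by ring,
        abs_neg, abs_of_pos (by positivity)]
      exact hnδ
    have h1 := hbd _ (hy i (le_of_lt hi)) _ (hy (i+1) hi1)
    simp only at h1
    have h2 := abs_le.mp h1
    linarith [h2.1, h2.2]
  set c : ℝ := m - 2 * D - ε with hcdef
  have hc0 : c ≤ dist ρ' (y 0) := by
    have := hyρ 0 (Nat.zero_le n)
    rw [hcdef]
    linarith
  have hcseg : ∀ i < n, c ≤ min (dist ρ' (y i)) (dist ρ' (y (i+1))) -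
      dist (y i) (y (i+1)) / 2 := by
    intro i hi
    have h1 := hyρ i (le_of_lt hi)
    have h2 := hyρ (i+1) hi
    have h3 := hstep i hi
    have hmin : m - D ≤ min (dist ρ' (y i)) (dist ρ' (y (i+1))) := le_min h1 h2
    rw [hcdef]
    linarith
  obtain ⟨p, hp⟩ := chain_path hgeo' ρ' c n y hc0 hcseg
  set m' : ℝ := ⨅ t : Set.Icc (0:ℝ) 1, dist ρ' (pathFun p t) with hm'def
  have hm'mem : m' ∈ Mset ρ' a' b' := by
    refine ⟨pathFun p, (pathFun_cont p).continuousOn, ?_, ?_, hm'def⟩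
    · rw [pathFun_zero, hy0]
    · rw [pathFun_one, hyn]
  have hcm' : c ≤ m' := by
    rw [hm'def]
    refine le_ciInf fun t => ?_
    rw [pathFun_mem p t.2]
    exact hp _
  have := le_csSup hbdd' hm'mem
  rw [hcdef] at hcm'
  linarith

/-- If `R` is a correspondence between two pointed compact geodesic spaces with distortion
`D`, then the induced correspondence between the cactus spaces (which pairs classes having
`R`-related representatives, and hence has distortion equal to the distortion of `R` with
respect to the cactus pseudo-distances) has distortion at most `6 D`. -/
theorem stmt9 {E E' : Type*} [MetricSpace E] [CompactSpace E]
    [MetricSpace E'] [CompactSpace E']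
    (hgeo : IsGeodesicSpace E) (hgeo' : IsGeodesicSpace E') (ρ : E) (ρ' : E')
    (R : Set (E × E')) (hR : IsCorrespondence ρ ρ' R) (D : ℝ)
    (hD : distortion (fun a b : E => dist a b) (fun a b : E' => dist a b) R = D) :
    distortion (dKac ρ) (dKac ρ') R ≤ 6 * D := by
  obtain ⟨hρ, hs1, hs2⟩ := hR
  have hBdd : BddAbove {r : ℝ | ∃ p ∈ R, ∃ q ∈ R,
      r = |(fun a b : E => dist a b) p.1 q.1 - (fun a b : E' => dist a b) p.2 q.2|} := by
    refine ⟨Metric.diam (Set.univ : Set E) + Metric.diam (Set.univ : Set E'), ?_⟩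
    rintro r ⟨p, hp, q, hq, rfl⟩
    simp only
    have h1 : dist p.1 q.1 ≤ Metric.diam (Set.univ : Set E) :=
      Metric.dist_le_diam_of_mem isCompact_univ.isBounded trivial trivial
    have h2 : dist p.2 q.2 ≤ Metric.diam (Set.univ : Set E') :=
      Metric.dist_le_diam_of_mem isCompact_univ.isBounded trivial trivial
    have h3 : (0:ℝ) ≤ dist p.1 q.1 := dist_nonneg
    have h4 : (0:ℝ) ≤ dist p.2 q.2 := dist_nonneg
    rw [abs_le]
    constructor <;> linarith
  have hD0 : 0 ≤ D := by
    rw [← hD]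
    have h0 : (0:ℝ) ∈ {r : ℝ | ∃ p ∈ R, ∃ q ∈ R,
        r = |(fun a b : E => dist a b) p.1 q.1 - (fun a b : E' => dist a b) p.2 q.2|} :=
      ⟨(ρ, ρ'), hρ, (ρ, ρ'), hρ, by simp⟩
    exact le_csSup hBdd h0
  have hbd : ∀ p ∈ R, ∀ q ∈ R, |dist p.1 q.1 - dist p.2 q.2| ≤ D := by
    intro p hp q hq
    rw [← hD]
    exact le_csSup hBdd ⟨p, hp, q, hq, rfl⟩
  apply Real.sSup_le _ (by linarith)
  rintro r ⟨⟨a, a'⟩, hp, ⟨b, b'⟩, hq, rfl⟩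
  have h1 := abs_le.mp (hbd _ hρ _ hp)
  have h2 := abs_le.mp (hbd _ hρ _ hq)
  simp only [dist] at h1 h2
  have k1 : sSup (Mset ρ a b) ≤ sSup (Mset ρ' a' b') + 2 * D :=
    key hgeo' ρ ρ' R hs1 D hD0 hbd hρ hp hq
  have k2 : sSup (Mset ρ' a' b') ≤ sSup (Mset ρ a b) + 2 * D := by
    refine key hgeo ρ' ρ {q : E' × E | (q.2, q.1) ∈ R}
      (fun x' => (hs2 x').imp fun y hy => hy) D hD0 ?_ hρ hp hq
    intro p hp q hq
    rw [abs_sub_comm]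
    exact hbd _ hp _ hq
  have e1 : dKac ρ a b = dist ρ a + dist ρ b - 2 * sSup (Mset ρ a b) := rfl
  have e2 : dKac ρ' a' b' = dist ρ' a' + dist ρ' b' - 2 * sSup (Mset ρ' a' b') := rfl
  simp only
  rw [e1, e2, abs_le]
  constructor <;> linarith [h1.1, h1.2, h2.1, h2.2]
end

section
/- The continuous cactus of any pointed compact geodesic metric space is a compact real tree (an R-tree). -/
/-- An arc in `T` from `x` to `y` with image `s`: an injective continuous path. -/
def IsArcWithImage {T : Type*} [TopologicalSpace T] (x y : T) (s : Set T) : Prop :=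
  ∃ γ : ℝ → T, ContinuousOn γ (Set.Icc 0 1) ∧ Set.InjOn γ (Set.Icc 0 1) ∧
    γ 0 = x ∧ γ 1 = y ∧ γ '' Set.Icc 0 1 = s

/-- A metric space is an `ℝ`-tree when any two distinct points are joined by a unique arc,
which is a geodesic segment. -/
def IsRTree (T : Type*) [MetricSpace T] : Prop :=
  ∀ x y : T, x ≠ y →
    (∃! s : Set T, IsArcWithImage x y s) ∧
    (∀ s : Set T, IsArcWithImage x y s →
      ∃ g : ℝ → T, g 0 = x ∧ g (dist x y) = y ∧
        (∀ u ∈ Set.Icc (0 : ℝ) (dist x y), ∀ v ∈ Set.Icc (0 : ℝ) (dist x y),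
          dist (g u) (g v) = |u - v|) ∧ g '' Set.Icc 0 (dist x y) = s)

namespace CactusProof

open Set

noncomputable instance : Nonempty (Set.Icc (0:ℝ) 1) := ⟨⟨0, le_refl 0, zero_le_one⟩⟩

variable {E : Type*} [MetricSpace E]

/-- infimum of the distance to ρ along a path -/
noncomputable def pinf (ρ : E) (γ : ℝ → E) : ℝ := ⨅ t : Set.Icc (0 : ℝ) 1, dist ρ (γ t)

def S (ρ a b : E) : Set ℝ :=
  {m : ℝ | ∃ γ : ℝ → E, ContinuousOn γ (Set.Icc 0 1) ∧ γ 0 = a ∧ γ 1 = b ∧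
      m = ⨅ t : Set.Icc (0 : ℝ) 1, dist ρ (γ t)}

noncomputable def mm (ρ a b : E) : ℝ := sSup (S ρ a b)

theorem dKac_eq (ρ a b : E) : dKac ρ a b = dist ρ a + dist ρ b - 2 * mm ρ a b := rfl

lemma bddBelow_range (ρ : E) (γ : ℝ → E) :
    BddBelow (Set.range fun t : Set.Icc (0:ℝ) 1 => dist ρ (γ t)) := by
  refine ⟨0, ?_⟩; rintro x ⟨t, rfl⟩; exact dist_nonneg

lemma pinf_nonneg (ρ : E) (γ : ℝ → E) : 0 ≤ pinf ρ γ :=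
  le_ciInf fun t => dist_nonneg

lemma pinf_le (ρ : E) (γ : ℝ → E) (t : Set.Icc (0:ℝ) 1) : pinf ρ γ ≤ dist ρ (γ t) :=
  ciInf_le (bddBelow_range ρ γ) t

lemma le_pinf (ρ : E) (γ : ℝ → E) {c : ℝ} (h : ∀ t : Set.Icc (0:ℝ) 1, c ≤ dist ρ (γ t)) :
    c ≤ pinf ρ γ := le_ciInf h

lemma pinf_mem_S (ρ : E) {a b : E} (γ : ℝ → E) (hc : ContinuousOn γ (Set.Icc 0 1))
    (h0 : γ 0 = a) (h1 : γ 1 = b) : pinf ρ γ ∈ S ρ a b := ⟨γ, hc, h0, h1, rfl⟩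

/-- every element of `S` is at most the distances to the endpoints -/
lemma mem_S_le {ρ a b : E} {m : ℝ} (hm : m ∈ S ρ a b) :
    m ≤ dist ρ a ∧ m ≤ dist ρ b := by
  obtain ⟨γ, hc, h0, h1, rfl⟩ := hm
  constructor
  · have := pinf_le ρ γ ⟨0, le_refl 0, zero_le_one⟩
    rwa [h0] at this
  · have := pinf_le ρ γ ⟨1, zero_le_one, le_refl 1⟩
    rwa [h1] at this

lemma mem_S_nonneg {ρ a b : E} {m : ℝ} (hm : m ∈ S ρ a b) : 0 ≤ m := by
  obtain ⟨γ, hc, h0, h1, rfl⟩ := hm; exact pinf_nonneg ρ γ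

lemma S_bddAbove (ρ a b : E) : BddAbove (S ρ a b) :=
  ⟨dist ρ a, fun _ hm => (mem_S_le hm).1⟩

section geo
variable (hgeo : IsGeodesicSpace E)
include hgeo

/-- the straight geodesic reparametrized to [0,1], as an element of S -/
lemma geo_mem_S (ρ a b : E) :
    ∃ m ∈ S ρ a b, max (dist ρ a) (dist ρ b) - dist a b ≤ m := by
  obtain ⟨γ, h0, h1, hiso⟩ := hgeo a b
  set D := dist a b with hD
  have hD0 : 0 ≤ D := dist_nonneg
  set γ' : ℝ → E := fun t => γ (t * D) with hγ'
  have hmaps : ∀ t ∈ Set.Icc (0:ℝ) 1, t * D ∈ Set.Icc 0 D := by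
    intro t ht
    exact ⟨mul_nonneg ht.1 hD0, by nlinarith [ht.1, ht.2]⟩
  have hcγ : ContinuousOn γ (Set.Icc 0 D) := by
    have : LipschitzOnWith 1 γ (Set.Icc 0 D) := by
      apply LipschitzOnWith.of_dist_le_mul
      intro x hx y hy
      rw [hiso x hx y hy]
      simp [Real.dist_eq]
    exact this.continuousOn
  have hc : ContinuousOn γ' (Set.Icc 0 1) := by
    apply hcγ.comp ((continuous_id.mul continuous_const).continuousOn)
    intro t ht; exact hmaps t ht
  have h0' : γ' 0 = a := by simp [hγ', h0]
  have h1' : γ' 1 = b := by simp [hγ', h1]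
  refine ⟨pinf ρ γ', pinf_mem_S ρ γ' hc h0' h1', ?_⟩
  apply le_pinf
  rintro ⟨t, ht⟩
  have htD := hmaps t ht
  have hda : dist a (γ (t * D)) = t * D := by
    have := hiso 0 ⟨le_refl 0, hD0⟩ (t*D) htD
    rw [h0] at this; rw [this]; rw [abs_of_nonpos (by linarith [htD.1])]; ring
  have hdb : dist b (γ (t * D)) = D - t * D := by
    have := hiso D ⟨hD0, le_refl D⟩ (t*D) htD
    rw [h1] at this; rw [this]; rw [abs_of_nonneg (by linarith [htD.2])]
  have t1 : dist ρ a - dist a (γ (t*D)) ≤ dist ρ (γ' t) := by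
    have := dist_triangle ρ (γ (t*D)) a
    simp only [hγ']
    rw [dist_comm (γ (t*D)) a] at this
    linarith
  have t2 : dist ρ b - dist b (γ (t*D)) ≤ dist ρ (γ' t) := by
    have := dist_triangle ρ (γ (t*D)) b
    simp only [hγ']
    rw [dist_comm (γ (t*D)) b] at this
    linarith
  rw [hda] at t1; rw [hdb] at t2
  rcases max_cases (dist ρ a) (dist ρ b) with ⟨h, _⟩ | ⟨h, _⟩ <;> rw [h]
  · have : t * D ≤ D := by nlinarith [ht.1, ht.2]
    linarith
  · have : 0 ≤ t * D := mul_nonneg ht.1 hD0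
    linarith

lemma S_nonempty (ρ a b : E) : (S ρ a b).Nonempty := by
  obtain ⟨m, hm, _⟩ := geo_mem_S hgeo ρ a b; exact ⟨m, hm⟩

lemma mm_le (ρ a b : E) : mm ρ a b ≤ min (dist ρ a) (dist ρ b) :=
  csSup_le (S_nonempty hgeo ρ a b) fun m hm => le_min (mem_S_le hm).1 (mem_S_le hm).2

omit hgeo in
lemma le_mm {ρ a b : E} {m : ℝ} (hm : m ∈ S ρ a b) : m ≤ mm ρ a b :=
  le_csSup (S_bddAbove ρ a b) hm

lemma mm_nonneg (ρ a b : E) : 0 ≤ mm ρ a b := by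
  obtain ⟨m, hm⟩ := S_nonempty hgeo ρ a b
  exact le_trans (mem_S_nonneg hm) (le_mm hm)

lemma mm_ge_geo (ρ a b : E) : max (dist ρ a) (dist ρ b) - dist a b ≤ mm ρ a b := by
  obtain ⟨m, hm, h⟩ := geo_mem_S hgeo ρ a b
  exact le_trans h (le_mm hm)

end geo



omit [MetricSpace E] in
lemma affine_mem {r s L t : ℝ} (hr : r ∈ Set.Icc 0 L) (hs : s ∈ Set.Icc 0 L)
    (ht : t ∈ Set.Icc (0:ℝ) 1) : r + t * (s - r) ∈ Set.Icc 0 L := by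
  obtain ⟨hr0, hrL⟩ := hr; obtain ⟨hs0, hsL⟩ := hs; obtain ⟨ht0, ht1⟩ := ht
  constructor <;> nlinarith

lemma S_comm (ρ a b : E) : S ρ a b ⊆ S ρ b a := by
  rintro m ⟨γ, hc, h0, h1, rfl⟩
  set γ' : ℝ → E := fun t => γ (1 - t) with hγ'
  have hmaps : ∀ t ∈ Set.Icc (0:ℝ) 1, 1 - t ∈ Set.Icc (0:ℝ) 1 := by
    intro t ht; exact ⟨by linarith [ht.2], by linarith [ht.1]⟩
  have hc' : ContinuousOn γ' (Set.Icc 0 1) :=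
    hc.comp ((continuous_const.sub continuous_id).continuousOn) hmaps
  refine ⟨γ', hc', by simp [hγ', h1], by simp [hγ', h0], ?_⟩
  apply le_antisymm
  · apply le_pinf
    rintro ⟨t, ht⟩
    have := pinf_le ρ γ ⟨1 - t, hmaps t ht⟩
    exact this
  · apply le_pinf
    rintro ⟨t, ht⟩
    have := pinf_le ρ γ' ⟨1 - t, hmaps t ht⟩
    simp only [hγ'] at this ⊢
    have h2 : (1:ℝ) - (1 - t) = t := by ring
    rwa [h2] at this

lemma glue_mem {ρ a b c : E} {m1 m2 : ℝ} (h1 : m1 ∈ S ρ a b) (h2 : m2 ∈ S ρ b c) :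
    min m1 m2 ∈ S ρ a c := by
  obtain ⟨γ1, hc1, g10, g11, rfl⟩ := h1
  obtain ⟨γ2, hc2, g20, g21, rfl⟩ := h2
  classical
  set γ : ℝ → E := fun t => if t ≤ (1/2 : ℝ) then γ1 (2 * t) else γ2 (2 * t - 1) with hγ
  have hcont : ContinuousOn γ (Set.Icc 0 1) := by
    apply ContinuousOn.if
    · intro t ht
      have hfr : t ∈ frontier (Set.Iic (1/2 : ℝ)) := ht.2
      rw [frontier_Iic] at hfr
      simp only [Set.mem_singleton_iff] at hfr
      subst hfr
      norm_num [g11, g20]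
    · have h2t : ContinuousOn (fun t : ℝ => 2 * t) (Set.Icc 0 (1/2)) :=
        (continuous_const.mul continuous_id).continuousOn
      have hcomp := ContinuousOn.comp hc1 h2t
        (fun t ht => ⟨by linarith [ht.1], by linarith [ht.2]⟩)
      apply hcomp.mono
      rintro t ⟨ht, ht2⟩
      rw [show {a : ℝ | a ≤ 1/2} = Set.Iic (1/2:ℝ) from rfl, closure_Iic] at ht2
      exact ⟨ht.1, ht2⟩
    · have h2t : ContinuousOn (fun t : ℝ => 2 * t - 1) (Set.Icc (1/2) 1) :=
        ((continuous_const.mul continuous_id).sub continuous_const).continuousOn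
      have hcomp := ContinuousOn.comp hc2 h2t
        (fun t ht => ⟨by linarith [ht.1], by linarith [ht.2]⟩)
      apply hcomp.mono
      rintro t ⟨ht, ht2⟩
      rw [show {a : ℝ | ¬ a ≤ 1/2} = Set.Ioi (1/2:ℝ) by ext z; simp, closure_Ioi] at ht2
      exact ⟨ht2, ht.2⟩
  have hg0 : γ 0 = a := by
    simp only [hγ]; rw [if_pos (by norm_num)]; simpa using g10
  have hg1 : γ 1 = c := by
    simp only [hγ]; rw [if_neg (by norm_num)]; norm_num [g21]
  refine ⟨γ, hcont, hg0, hg1, ?_⟩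
  show min (pinf ρ γ1) (pinf ρ γ2) = pinf ρ γ
  apply le_antisymm
  · apply le_pinf
    rintro ⟨t, ht⟩
    simp only [hγ]
    by_cases htle : t ≤ (1/2:ℝ)
    · rw [if_pos htle]
      refine le_trans (min_le_left _ _) ?_
      exact pinf_le ρ γ1 ⟨2*t, ⟨by linarith [ht.1], by linarith⟩⟩
    · rw [if_neg htle]
      push_neg at htle
      refine le_trans (min_le_right _ _) ?_
      exact pinf_le ρ γ2 ⟨2*t - 1, ⟨by linarith, by linarith [ht.2]⟩⟩
  · apply le_min
    · apply le_pinf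
      rintro ⟨u, hu⟩
      have hidx : u / 2 ∈ Set.Icc (0:ℝ) 1 := ⟨by linarith [hu.1], by linarith [hu.2]⟩
      have := pinf_le ρ γ ⟨u/2, hidx⟩
      have hval : γ (u/2) = γ1 u := by
        simp only [hγ]; rw [if_pos (by linarith [hu.2])]
        congr 1; ring
      rwa [hval] at this
    · apply le_pinf
      rintro ⟨u, hu⟩
      have hidx : (u+1) / 2 ∈ Set.Icc (0:ℝ) 1 := ⟨by linarith [hu.1], by linarith [hu.2]⟩
      have := pinf_le ρ γ ⟨(u+1)/2, hidx⟩
      have hval : γ ((u+1)/2) = γ2 u := by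
        simp only [hγ]
        rcases le_or_gt u 0 with hu0 | hu0
        · have hu0' : u = 0 := le_antisymm hu0 hu.1
          subst hu0'
          rw [if_pos (by norm_num)]
          norm_num [g11, g20]
        · rw [if_neg (by intro h; nlinarith)]
          have h2 : 2 * ((u+1)/2) - 1 = u := by ring
          rw [h2]
      rwa [hval] at this

section geo2
variable (hgeo : IsGeodesicSpace E)
include hgeo

lemma mm_comm (ρ a b : E) : mm ρ a b = mm ρ b a := by
  apply le_antisymm <;>
    exact csSup_le_csSup (S_bddAbove ρ _ _) (S_nonempty hgeo ρ _ _) (S_comm ρ _ _)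

lemma mm_glue (ρ a b c : E) : min (mm ρ a b) (mm ρ b c) ≤ mm ρ a c := by
  apply le_of_forall_lt
  intro x hx
  obtain ⟨m1, hm1, hxm1⟩ := exists_lt_of_lt_csSup (S_nonempty hgeo ρ a b) (lt_of_lt_of_le hx (min_le_left _ _))
  obtain ⟨m2, hm2, hxm2⟩ := exists_lt_of_lt_csSup (S_nonempty hgeo ρ b c) (lt_of_lt_of_le hx (min_le_right _ _))
  calc x < min m1 m2 := lt_min hxm1 hxm2
    _ ≤ mm ρ a c := le_mm (glue_mem hm1 hm2)

lemma mm_self (ρ a : E) : mm ρ a a = dist ρ a := by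
  apply le_antisymm
  · exact le_trans (mm_le hgeo ρ a a) (min_le_left _ _)
  · have hmem : dist ρ a ∈ S ρ a a := by
      have : pinf ρ (fun _ => a) ∈ S ρ a a :=
        pinf_mem_S ρ _ continuousOn_const rfl rfl
      rwa [show pinf ρ (fun _ => a) = dist ρ a from ciInf_const] at this
    exact le_mm hmem

lemma mm_root (ρ a : E) : mm ρ ρ a = 0 := by
  apply le_antisymm
  · exact le_trans (mm_le hgeo ρ ρ a) (by simp)
  · exact mm_nonneg hgeo ρ ρ a

lemma dKac_self (ρ a : E) : dKac ρ a a = 0 := by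
  rw [dKac_eq, mm_self hgeo]; ring

lemma dKac_comm (ρ a b : E) : dKac ρ a b = dKac ρ b a := by
  rw [dKac_eq, dKac_eq, mm_comm hgeo]; ring

lemma dKac_triangle (ρ a b c : E) : dKac ρ a c ≤ dKac ρ a b + dKac ρ b c := by
  rw [dKac_eq, dKac_eq, dKac_eq]
  have h1 : min (mm ρ a b) (mm ρ b c) ≤ mm ρ a c := mm_glue hgeo ρ a b c
  have h2 : mm ρ a b ≤ dist ρ b := le_trans (mm_le hgeo ρ a b) (min_le_right _ _)
  have h3 : mm ρ b c ≤ dist ρ b := le_trans (mm_le hgeo ρ b c) (min_le_left _ _)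
  rcases le_total (mm ρ a b) (mm ρ b c) with h | h
  · rw [min_eq_left h] at h1; linarith
  · rw [min_eq_right h] at h1; linarith

lemma abs_le_dKac (ρ a b : E) : |dist ρ a - dist ρ b| ≤ dKac ρ a b := by
  rw [dKac_eq]
  have := mm_le hgeo ρ a b
  rcases abs_cases (dist ρ a - dist ρ b) with ⟨h, _⟩ | ⟨h, _⟩ <;> rw [h]
  · have : mm ρ a b ≤ dist ρ b := le_trans this (min_le_right _ _); linarith
  · have : mm ρ a b ≤ dist ρ a := le_trans this (min_le_left _ _); linarith

lemma dKac_nonneg (ρ a b : E) : 0 ≤ dKac ρ a b :=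
  le_trans (abs_nonneg _) (abs_le_dKac hgeo ρ a b)

lemma dKac_le_two_dist (ρ a b : E) : dKac ρ a b ≤ 2 * dist a b := by
  rw [dKac_eq]
  have := mm_ge_geo hgeo ρ a b
  rcases max_cases (dist ρ a) (dist ρ b) with ⟨h, h'⟩ | ⟨h, h'⟩ <;> rw [h] at this <;> linarith

lemma dKac_dist_root (ρ a : E) : dKac ρ ρ a = dist ρ a := by
  rw [dKac_eq, mm_root hgeo]; simp

end geo2
section branch
variable {ρ : E} {σ : ℝ → E} {L : ℝ}

lemma branch_dist (hσ0 : σ 0 = ρ) (hL : 0 ≤ L)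
    (hiso : ∀ u ∈ Set.Icc (0:ℝ) L, ∀ v ∈ Set.Icc (0:ℝ) L, dist (σ u) (σ v) = |u - v|)
    {u : ℝ} (hu : u ∈ Set.Icc (0:ℝ) L) : dist ρ (σ u) = u := by
  have := hiso 0 ⟨le_refl 0, hL⟩ u hu
  rw [hσ0] at this
  rw [this, abs_of_nonpos (by linarith [hu.1])]; ring

lemma branch_cont (hL : 0 ≤ L)
    (hiso : ∀ u ∈ Set.Icc (0:ℝ) L, ∀ v ∈ Set.Icc (0:ℝ) L, dist (σ u) (σ v) = |u - v|) :
    ContinuousOn σ (Set.Icc 0 L) := by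
  have : LipschitzOnWith 1 σ (Set.Icc 0 L) := by
    apply LipschitzOnWith.of_dist_le_mul
    intro x hx y hy
    rw [hiso x hx y hy]; simp [Real.dist_eq]
  exact this.continuousOn

lemma seg_mem (hσ0 : σ 0 = ρ) (hL : 0 ≤ L)
    (hiso : ∀ u ∈ Set.Icc (0:ℝ) L, ∀ v ∈ Set.Icc (0:ℝ) L, dist (σ u) (σ v) = |u - v|)
    {r s : ℝ} (hr : r ∈ Set.Icc (0:ℝ) L) (hs : s ∈ Set.Icc (0:ℝ) L) :
    min r s ∈ S ρ (σ r) (σ s) := by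
  set γ : ℝ → E := fun t => σ (r + t * (s - r)) with hγ
  have hmaps : ∀ t ∈ Set.Icc (0:ℝ) 1, r + t * (s - r) ∈ Set.Icc 0 L :=
    fun t ht => affine_mem hr hs ht
  have hc : ContinuousOn γ (Set.Icc 0 1) := by
    have haff : ContinuousOn (fun t : ℝ => r + t * (s - r)) (Set.Icc 0 1) :=
      (continuous_const.add (continuous_id.mul continuous_const)).continuousOn
    exact ContinuousOn.comp (branch_cont hL hiso) haff hmaps
  have h0 : γ 0 = σ r := by simp [hγ]
  have h1 : γ 1 = σ s := by simp [hγ]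
  have hval : ∀ t ∈ Set.Icc (0:ℝ) 1, dist ρ (γ t) = r + t * (s - r) := by
    intro t ht
    exact branch_dist hσ0 hL hiso (hmaps t ht)
  have : pinf ρ γ ∈ S ρ (σ r) (σ s) := pinf_mem_S ρ γ hc h0 h1
  have hpinf : pinf ρ γ = min r s := by
    apply le_antisymm
    · rcases le_total r s with h | h
      · rw [min_eq_left h]
        have := pinf_le ρ γ ⟨0, le_refl 0, zero_le_one⟩
        rw [hval 0 ⟨le_refl 0, zero_le_one⟩] at this
        linarith
      · rw [min_eq_right h]
        have := pinf_le ρ γ ⟨1, zero_le_one, le_refl 1⟩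
        rw [hval 1 ⟨zero_le_one, le_refl 1⟩] at this
        linarith
    · apply le_pinf
      rintro ⟨t, ht⟩
      rw [hval t ht]
      rcases le_total r s with h | h
      · rw [min_eq_left h]; nlinarith [ht.1, ht.2]
      · rw [min_eq_right h]; nlinarith [ht.1, ht.2]
  rwa [hpinf] at this

variable (hgeo : IsGeodesicSpace E)
include hgeo

lemma mm_branch (hσ0 : σ 0 = ρ) (hL : 0 ≤ L)
    (hiso : ∀ u ∈ Set.Icc (0:ℝ) L, ∀ v ∈ Set.Icc (0:ℝ) L, dist (σ u) (σ v) = |u - v|)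
    {r s : ℝ} (hr : r ∈ Set.Icc (0:ℝ) L) (hs : s ∈ Set.Icc (0:ℝ) L) :
    mm ρ (σ r) (σ s) = min r s := by
  apply le_antisymm
  · have := mm_le hgeo ρ (σ r) (σ s)
    rwa [branch_dist hσ0 hL hiso hr, branch_dist hσ0 hL hiso hs] at this
  · exact le_mm (seg_mem hσ0 hL hiso hr hs)

lemma dKac_branch (hσ0 : σ 0 = ρ) (hL : 0 ≤ L)
    (hiso : ∀ u ∈ Set.Icc (0:ℝ) L, ∀ v ∈ Set.Icc (0:ℝ) L, dist (σ u) (σ v) = |u - v|)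
    {r s : ℝ} (hr : r ∈ Set.Icc (0:ℝ) L) (hs : s ∈ Set.Icc (0:ℝ) L) :
    dKac ρ (σ r) (σ s) = |r - s| := by
  rw [dKac_eq, branch_dist hσ0 hL hiso hr, branch_dist hσ0 hL hiso hs,
    mm_branch hgeo hσ0 hL hiso hr hs]
  rcases le_total r s with h | h
  · rw [min_eq_left h, abs_of_nonpos (by linarith)]; ring
  · rw [min_eq_right h, abs_of_nonneg (by linarith)]; ring

end branch

section cross
variable {ρ a b : E} {σ τ : ℝ → E}
variable (hgeo : IsGeodesicSpace E)
include hgeo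

lemma mm_cross
    (hσ0 : σ 0 = ρ) (hσ1 : σ (dist ρ a) = a)
    (hσiso : ∀ u ∈ Set.Icc (0:ℝ) (dist ρ a), ∀ v ∈ Set.Icc (0:ℝ) (dist ρ a),
      dist (σ u) (σ v) = |u - v|)
    (hτ0 : τ 0 = ρ) (hτ1 : τ (dist ρ b) = b)
    (hτiso : ∀ u ∈ Set.Icc (0:ℝ) (dist ρ b), ∀ v ∈ Set.Icc (0:ℝ) (dist ρ b),
      dist (τ u) (τ v) = |u - v|)
    {r s : ℝ} (hr : r ∈ Set.Icc (mm ρ a b) (dist ρ a)) (hs : s ∈ Set.Icc (mm ρ a b) (dist ρ b)) :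
    mm ρ (σ r) (τ s) = mm ρ a b := by
  set M := mm ρ a b with hM
  have hM0 : 0 ≤ M := mm_nonneg hgeo ρ a b
  have hr' : r ∈ Set.Icc (0:ℝ) (dist ρ a) := ⟨le_trans hM0 hr.1, hr.2⟩
  have hs' : s ∈ Set.Icc (0:ℝ) (dist ρ b) := ⟨le_trans hM0 hs.1, hs.2⟩
  have hLa : (0:ℝ) ≤ dist ρ a := dist_nonneg
  have hLb : (0:ℝ) ≤ dist ρ b := dist_nonneg
  have hatop : dist ρ a ∈ Set.Icc (0:ℝ) (dist ρ a) := ⟨hLa, le_refl _⟩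
  have hbtop : dist ρ b ∈ Set.Icc (0:ℝ) (dist ρ b) := ⟨hLb, le_refl _⟩
  -- membership: r ∈ S ρ (σ r) a  and  r ∈ S ρ a (σ r)
  have mem1 : r ∈ S ρ (σ r) a := by
    have := seg_mem hσ0 hLa hσiso hr' hatop
    rwa [hσ1, min_eq_left hr.2] at this
  have mem1' : r ∈ S ρ a (σ r) := by
    have := seg_mem hσ0 hLa hσiso hatop hr'
    rwa [hσ1, min_eq_right hr.2] at this
  have mem2 : s ∈ S ρ b (τ s) := by
    have := seg_mem hτ0 hLb hτiso hbtop hs'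
    rwa [hτ1, min_eq_right hs.2] at this
  have mem2' : s ∈ S ρ (τ s) b := by
    have := seg_mem hτ0 hLb hτiso hs' hbtop
    rwa [hτ1, min_eq_left hs.2] at this
  apply le_antisymm
  · apply csSup_le (S_nonempty hgeo ρ (σ r) (τ s))
    intro m hm
    have hmr : m ≤ r := by
      have := (mem_S_le hm).1
      rwa [branch_dist hσ0 hLa hσiso hr'] at this
    have hms : m ≤ s := by
      have := (mem_S_le hm).2
      rwa [branch_dist hτ0 hLb hτiso hs'] at this
    have big := glue_mem mem1' (glue_mem hm mem2')
    have : min r (min m s) ≤ M := le_mm big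
    rwa [min_eq_left hms, min_eq_right hmr] at this
  · apply le_of_forall_lt
    intro x hx
    obtain ⟨mγ, hmγ, hxmγ⟩ := exists_lt_of_lt_csSup (S_nonempty hgeo ρ a b) hx
    have big := glue_mem mem1 (glue_mem hmγ mem2)
    calc x < min r (min mγ s) := by
          apply lt_min (lt_of_lt_of_le hx hr.1)
          exact lt_min hxmγ (lt_of_lt_of_le hx hs.1)
      _ ≤ mm ρ (σ r) (τ s) := le_mm big

lemma dKac_cross
    (hσ0 : σ 0 = ρ) (hσ1 : σ (dist ρ a) = a)
    (hσiso : ∀ u ∈ Set.Icc (0:ℝ) (dist ρ a), ∀ v ∈ Set.Icc (0:ℝ) (dist ρ a),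
      dist (σ u) (σ v) = |u - v|)
    (hτ0 : τ 0 = ρ) (hτ1 : τ (dist ρ b) = b)
    (hτiso : ∀ u ∈ Set.Icc (0:ℝ) (dist ρ b), ∀ v ∈ Set.Icc (0:ℝ) (dist ρ b),
      dist (τ u) (τ v) = |u - v|)
    {r s : ℝ} (hr : r ∈ Set.Icc (mm ρ a b) (dist ρ a)) (hs : s ∈ Set.Icc (mm ρ a b) (dist ρ b)) :
    dKac ρ (σ r) (τ s) = r + s - 2 * mm ρ a b := by
  have hM0 : 0 ≤ mm ρ a b := mm_nonneg hgeo ρ a b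
  rw [dKac_eq, branch_dist hσ0 dist_nonneg hσiso ⟨le_trans hM0 hr.1, hr.2⟩,
    branch_dist hτ0 dist_nonneg hτiso ⟨le_trans hM0 hs.1, hs.2⟩,
    mm_cross hgeo hσ0 hσ1 hσiso hτ0 hτ1 hτiso hr hs]

end cross
section fourpoint

omit [MetricSpace E] in
private lemma four_aux {A B C D E F : ℝ}
    (hA1 : min C F ≤ A) (hA2 : min E D ≤ A) (hB1 : min C E ≤ B) (hB2 : min F D ≤ B)
    (hCE : C ≤ E) (hCF : C ≤ F) :
    min (C + D) (E + F) ≤ A + B := by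
  rw [min_eq_left hCF] at hA1
  rw [min_eq_left hCE] at hB1
  rcases le_total E D with h1 | h1
  · rw [min_eq_left h1] at hA2
    rcases le_total F D with h2 | h2
    · rw [min_eq_left h2] at hB2
      exact le_trans (min_le_right _ _) (by linarith)
    · rw [min_eq_right h2] at hB2
      exact le_trans (min_le_left _ _) (by linarith)
  · rw [min_eq_right h1] at hA2
    rcases le_total F D with h2 | h2
    · rw [min_eq_left h2] at hB2
      exact le_trans (min_le_left _ _) (by linarith)
    · rw [min_eq_right h2] at hB2
      exact le_trans (min_le_left _ _) (by linarith)

omit [MetricSpace E] in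
private lemma four_main {A B C D E F : ℝ}
    (hA1 : min C F ≤ A) (hA2 : min E D ≤ A) (hB1 : min C E ≤ B) (hB2 : min F D ≤ B) :
    min (C + D) (E + F) ≤ A + B := by
  have perm2 : F ≤ D → F ≤ C → min (C + D) (E + F) ≤ A + B := by
    intro h1 h2
    have := four_aux (A := A) (B := B) (C := F) (D := E) (E := D) (F := C)
      (by rwa [min_comm] at hA1) (by rwa [min_comm] at hA2) hB2 hB1 h1 h2
    rwa [min_comm, add_comm F E, add_comm D C] at this
  have perm3 : E ≤ C → E ≤ D → min (C + D) (E + F) ≤ A + B := by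
    intro h1 h2
    have := four_aux (A := A) (B := B) (C := E) (D := F) (E := C) (F := D)
      hA2 hA1 (by rwa [min_comm] at hB1) (by rwa [min_comm] at hB2) h1 h2
    rwa [min_comm] at this
  have perm4 : D ≤ F → D ≤ E → min (C + D) (E + F) ≤ A + B := by
    intro h1 h2
    have := four_aux (A := A) (B := B) (C := D) (D := C) (E := F) (F := E)
      (by rwa [min_comm] at hA2) (by rwa [min_comm] at hA1)
      (by rwa [min_comm] at hB2) (by rwa [min_comm] at hB1) h1 h2
    rwa [add_comm D C, add_comm F E] at this
  rcases le_total C E with hCE | hEC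
  · rcases le_total C F with hCF | hFC
    · exact four_aux hA1 hA2 hB1 hB2 hCE hCF
    · rcases le_total F D with hFD | hDF
      · exact perm2 hFD hFC
      · exact perm4 hDF (le_trans hDF (le_trans hFC hCE))
  · rcases le_total E D with hED | hDE
    · exact perm3 hEC hED
    · rcases le_total D F with hDF | hFD
      · exact perm4 hDF hDE
      · exact perm2 hFD (le_trans hFD (le_trans hDE hEC))

end fourpoint

section Tlevel
variable {T : Type*} [MetricSpace T]
variable (hgeo : IsGeodesicSpace E) (ρ : E) (p : E → T)
  (hsurj : Function.Surjective p) (hd : ∀ a b : E, dist (p a) (p b) = dKac ρ a b)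

include hgeo hsurj hd in
/-- 0-hyperbolicity of T at every basepoint, in unnormalized Gromov-product form. -/
lemma T_hyp : ∀ z x y w : T,
    min (dist z x + dist z w - dist x w) (dist z w + dist z y - dist w y)
      ≤ dist z x + dist z y - dist x y := by
  intro z x y w
  obtain ⟨a, rfl⟩ := hsurj x
  obtain ⟨b, rfl⟩ := hsurj y
  obtain ⟨c, rfl⟩ := hsurj z
  obtain ⟨d, rfl⟩ := hsurj w
  simp only [hd, dKac_eq]
  have hA1 : min (mm ρ a d) (mm ρ b d) ≤ mm ρ a b := by
    have h := mm_glue hgeo ρ a d b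
    rwa [mm_comm hgeo ρ d b] at h
  have hA2 : min (mm ρ a c) (mm ρ b c) ≤ mm ρ a b := by
    have h := mm_glue hgeo ρ a c b
    rwa [mm_comm hgeo ρ c b] at h
  have hB1 : min (mm ρ a d) (mm ρ a c) ≤ mm ρ c d := by
    have h := mm_glue hgeo ρ c a d
    rwa [mm_comm hgeo ρ c a, min_comm] at h
  have hB2 : min (mm ρ b d) (mm ρ b c) ≤ mm ρ c d := by
    have h := mm_glue hgeo ρ c b d
    rwa [mm_comm hgeo ρ c b, min_comm] at h
  have key := four_main hA1 hA2 hB1 hB2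
  have e1 := mm_comm hgeo ρ c a
  have e2 := mm_comm hgeo ρ c b
  have e3 := mm_comm hgeo ρ c d
  have e4 := mm_comm hgeo ρ d b
  have e5 := mm_comm hgeo ρ a d
  rcases le_total (mm ρ a d + mm ρ b c) (mm ρ a c + mm ρ b d) with h | h
  · rw [min_eq_left h] at key
    exact le_trans (min_le_left _ _) (by linarith)
  · rw [min_eq_right h] at key
    exact le_trans (min_le_right _ _) (by linarith)

omit [MetricSpace E] in
/-- any point on a geodesic between the endpoints of a path lies on the path -/
lemma mid_mem_path
    (hyp : ∀ z x y w : T,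
      min (dist z x + dist z w - dist x w) (dist z w + dist z y - dist w y)
        ≤ dist z x + dist z y - dist x y)
    {η : ℝ → T} (hc : ContinuousOn η (Set.Icc 0 1)) {x y z : T}
    (h0 : η 0 = x) (h1 : η 1 = y)
    (hz : dist x z + dist z y = dist x y) : z ∈ η '' Set.Icc 0 1 := by
  have hcd : ContinuousOn (fun t => dist z (η t)) (Set.Icc 0 1) :=
    (continuous_const.dist continuous_id).comp_continuousOn hc
  obtain ⟨t0, ht0, hmin⟩ := isCompact_Icc.exists_isMinOn
    (Set.nonempty_Icc.mpr zero_le_one) hcd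
  by_cases hz0 : dist z (η t0) = 0
  · exact ⟨t0, ht0, (eq_of_dist_eq_zero hz0).symm⟩
  set δ := dist z (η t0) with hδdef
  have hδ : 0 < δ := lt_of_le_of_ne dist_nonneg (Ne.symm hz0)
  have hlow : ∀ t ∈ Set.Icc (0:ℝ) 1, δ ≤ dist z (η t) := fun t ht => hmin ht
  have hu : UniformContinuousOn η (Set.Icc 0 1) :=
    isCompact_Icc.uniformContinuousOn_of_continuous hc
  obtain ⟨ε, hε, H⟩ := Metric.uniformContinuousOn_iff.mp hu (δ/2) (by positivity)
  obtain ⟨n, hn⟩ := exists_nat_one_div_lt hε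
  set N : ℝ := (n : ℝ) + 1 with hN
  have hNpos : (0:ℝ) < N := by positivity
  have hmem : ∀ k : ℕ, k ≤ n + 1 → (k : ℝ) / N ∈ Set.Icc (0:ℝ) 1 := by
    intro k hk
    constructor
    · positivity
    · rw [div_le_one hNpos]
      have : (k : ℝ) ≤ (n : ℝ) + 1 := by exact_mod_cast hk
      linarith
  have hstep : ∀ k : ℕ, k ≤ n → dist (η ((k:ℝ)/N)) (η (((k+1:ℕ):ℝ)/N)) < δ/2 := by
    intro k hk
    apply H _ (hmem k (le_trans hk (Nat.le_succ n))) _ (hmem (k+1) (Nat.succ_le_succ hk))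
    rw [Real.dist_eq]
    have : (k:ℝ)/N - ((k+1:ℕ):ℝ)/N = -(1/N) := by push_cast; field_simp; ring
    rw [this, abs_neg, abs_of_pos (by positivity)]
    exact hn
  have claim : ∀ k : ℕ, k ≤ n + 1 →
      δ ≤ dist z x + dist z (η ((k:ℝ)/N)) - dist x (η ((k:ℝ)/N)) := by
    intro k
    induction k with
    | zero =>
      intro _
      simp only [Nat.cast_zero, zero_div]
      rw [h0]
      have : δ ≤ dist z x := by
        have := hlow 0 ⟨le_refl 0, zero_le_one⟩
        rwa [h0] at this
      simp only [dist_self]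
      linarith
    | succ k ih =>
      intro hk1
      have hk : k ≤ n := Nat.lt_succ_iff.mp hk1
      have ihh := ih (le_trans hk (Nat.le_succ n))
      have hkey := hyp z x (η (((k+1:ℕ):ℝ)/N)) (η ((k:ℝ)/N))
      have hgr2 : δ ≤ dist z (η ((k:ℝ)/N)) + dist z (η (((k+1:ℕ):ℝ)/N))
          - dist (η ((k:ℝ)/N)) (η (((k+1:ℕ):ℝ)/N)) := by
        have l1 := hlow _ (hmem k (le_trans hk (Nat.le_succ n)))
        have l2 := hlow _ (hmem (k+1) hk1)
        have l3 := hstep k hk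
        linarith
      rcases le_total (dist z x + dist z (η ((k:ℝ)/N)) - dist x (η ((k:ℝ)/N)))
        (dist z (η ((k:ℝ)/N)) + dist z (η (((k+1:ℕ):ℝ)/N))
          - dist (η ((k:ℝ)/N)) (η (((k+1:ℕ):ℝ)/N))) with h | h
      · rw [min_eq_left h] at hkey; linarith
      · rw [min_eq_right h] at hkey; linarith
  have hfin := claim (n+1) (le_refl _)
  have hone : ((n+1:ℕ):ℝ)/N = 1 := by
    push_cast; field_simp; exact hN.symm
  rw [hone, h1] at hfin
  exfalso
  rw [dist_comm x z] at hz
  linarith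
include hgeo hd in
lemma exists_geodesic (a b : E) :
    ∃ g : ℝ → T, g 0 = p a ∧ g (dist (p a) (p b)) = p b ∧
      ∀ u ∈ Set.Icc (0:ℝ) (dist (p a) (p b)), ∀ v ∈ Set.Icc (0:ℝ) (dist (p a) (p b)),
        dist (g u) (g v) = |u - v| := by
  classical
  obtain ⟨σ, hσ0, hσ1, hσiso⟩ := hgeo ρ a
  obtain ⟨τ, hτ0, hτ1, hτiso⟩ := hgeo ρ b
  set M := mm ρ a b with hM
  set La := dist ρ a with hLa
  set Lb := dist ρ b with hLb
  have hM0 : 0 ≤ M := mm_nonneg hgeo ρ a b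
  have hMa : M ≤ La := le_trans (mm_le hgeo ρ a b) (min_le_left _ _)
  have hMb : M ≤ Lb := le_trans (mm_le hgeo ρ a b) (min_le_right _ _)
  have hDd : dist (p a) (p b) = La + Lb - 2 * M := by rw [hd, dKac_eq]
  set D := dist (p a) (p b) with hDdef
  set g : ℝ → T := fun u => if u ≤ La - M then p (σ (La - u)) else p (τ (u - La + 2*M))
    with hg
  -- key distance formulas
  have FA : ∀ u ∈ Set.Icc (0:ℝ) (La - M), ∀ v ∈ Set.Icc (0:ℝ) (La - M),
      dist (p (σ (La - u))) (p (σ (La - v))) = |u - v| := by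
    intro u hu v hv
    rw [hd, dKac_branch hgeo hσ0 dist_nonneg hσiso
      ⟨by linarith [hu.2], by linarith [hu.1]⟩ ⟨by linarith [hv.2], by linarith [hv.1]⟩]
    rw [show La - u - (La - v) = -(u - v) by ring, abs_neg]
  have FB : ∀ u ∈ Set.Icc (La - M) D, ∀ v ∈ Set.Icc (La - M) D,
      dist (p (τ (u - La + 2*M))) (p (τ (v - La + 2*M))) = |u - v| := by
    intro u hu v hv
    rw [hd, dKac_branch hgeo hτ0 dist_nonneg hτiso
      ⟨by linarith [hu.1], by rw [hDd] at hu; linarith [hu.2]⟩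
      ⟨by linarith [hv.1], by rw [hDd] at hv; linarith [hv.2]⟩]
    rw [show u - La + 2*M - (v - La + 2*M) = u - v by ring]
  have FC : ∀ u ∈ Set.Icc (0:ℝ) (La - M), ∀ v ∈ Set.Icc (La - M) D,
      dist (p (σ (La - u))) (p (τ (v - La + 2*M))) = v - u := by
    intro u hu v hv
    rw [hd, dKac_cross hgeo hσ0 hσ1 hσiso hτ0 hτ1 hτiso
      ⟨by linarith [hu.2], by linarith [hu.1]⟩
      ⟨by linarith [hv.1], by rw [hDd] at hv; linarith [hv.2]⟩]
    ring
  have hgval : ∀ u ∈ Set.Icc (0:ℝ) D, ∀ v ∈ Set.Icc (0:ℝ) D, dist (g u) (g v) = |u - v| := by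
    intro u hu v hv
    have hDge : La - M ≤ D := by rw [hDd]; linarith
    simp only [hg]
    by_cases h1 : u ≤ La - M <;> by_cases h2 : v ≤ La - M
    · rw [if_pos h1, if_pos h2]
      exact FA u ⟨hu.1, h1⟩ v ⟨hv.1, h2⟩
    · rw [if_pos h1, if_neg h2]
      push_neg at h2
      rw [FC u ⟨hu.1, h1⟩ v ⟨le_of_lt h2, hv.2⟩, abs_of_nonpos (by linarith)]
      ring
    · rw [if_neg h1, if_pos h2]
      push_neg at h1
      rw [dist_comm, FC v ⟨hv.1, h2⟩ u ⟨le_of_lt h1, hu.2⟩, abs_of_nonneg (by linarith)]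
    · rw [if_neg h1, if_neg h2]
      push_neg at h1 h2
      exact FB u ⟨le_of_lt h1, hu.2⟩ v ⟨le_of_lt h2, hv.2⟩
  have hg0 : g 0 = p a := by
    simp only [hg]
    rw [if_pos (by linarith), sub_zero, hσ1]
  have hgD : g D = p b := by
    have hDge : La - M ≤ D := by rw [hDd]; linarith
    by_cases h : D ≤ La - M
    · -- then Lb = M
      apply eq_of_dist_eq_zero
      have hDmem : D ∈ Set.Icc (0:ℝ) (La - M) := ⟨by rw [hDd]; linarith, h⟩
      have := FC D hDmem D ⟨hDge, le_refl D⟩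
      simp only [hg]
      rw [if_pos h]
      rw [show D - La + 2*M = Lb by rw [hDd]; ring, hτ1] at this
      rw [this]; ring
    · simp only [hg]
      rw [if_neg h, show D - La + 2*M = Lb by rw [hDd]; ring, hτ1]
  exact ⟨g, hg0, hgD, hgval⟩

include hgeo hsurj hd in
theorem cactus_isRTree : IsRTree T := by
  intro x y hxy
  obtain ⟨a, rfl⟩ := hsurj x
  obtain ⟨b, rfl⟩ := hsurj y
  obtain ⟨g, hg0, hgD, hgiso⟩ := exists_geodesic hgeo ρ p hd a b
  set D := dist (p a) (p b) with hDdef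
  have hD : 0 < D := dist_pos.mpr hxy
  set G : Set T := g '' Set.Icc 0 D with hG
  have hcg : ContinuousOn g (Set.Icc 0 D) := by
    have : LipschitzOnWith 1 g (Set.Icc 0 D) := by
      apply LipschitzOnWith.of_dist_le_mul
      intro u hu v hv
      rw [hgiso u hu v hv]
      simp [Real.dist_eq]
    exact this.continuousOn
  have hGconn : IsPreconnected G := isPreconnected_Icc.image g hcg
  -- the canonical arc
  have harc : IsArcWithImage (p a) (p b) G := by
    refine ⟨fun t => g (t * D), ?_, ?_, ?_, ?_, ?_⟩
    · have hmaps : ∀ t ∈ Set.Icc (0:ℝ) 1, t * D ∈ Set.Icc 0 D := by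
        intro t ht
        exact ⟨mul_nonneg ht.1 (le_of_lt hD), by nlinarith [ht.1, ht.2]⟩
      exact ContinuousOn.comp hcg ((continuous_id.mul continuous_const).continuousOn) hmaps
    · intro s hs t ht hst
      have hsD : s * D ∈ Set.Icc (0:ℝ) D :=
        ⟨mul_nonneg hs.1 (le_of_lt hD), by nlinarith [hs.1, hs.2]⟩
      have htD : t * D ∈ Set.Icc (0:ℝ) D :=
        ⟨mul_nonneg ht.1 (le_of_lt hD), by nlinarith [ht.1, ht.2]⟩
      have hst' : g (s*D) = g (t*D) := hst
      have := hgiso (s*D) hsD (t*D) htD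
      rw [hst', dist_self] at this
      have h0 : |s*D - t*D| = 0 := this.symm
      have : s*D - t*D = 0 := abs_eq_zero.mp h0
      have : (s - t) * D = 0 := by linarith [this]
      rcases mul_eq_zero.mp this with h | h
      · linarith [h]
      · exact absurd h (ne_of_gt hD)
    · show g (0 * D) = p a
      rw [zero_mul]; exact hg0
    · show g (1 * D) = p b
      rw [one_mul]; exact hgD
    · ext z
      constructor
      · rintro ⟨t, ht, rfl⟩
        exact ⟨t * D, ⟨mul_nonneg ht.1 (le_of_lt hD), by nlinarith [ht.1, ht.2]⟩, rfl⟩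
      · rintro ⟨u, hu, rfl⟩
        refine ⟨u / D, ⟨div_nonneg hu.1 (le_of_lt hD), ?_⟩, ?_⟩
        · rw [div_le_one hD]; exact hu.2
        · show g (u / D * D) = g u
          rw [div_mul_cancel₀ _ (ne_of_gt hD)]
  -- every point of G is on every arc
  have hyp := T_hyp hgeo ρ p hsurj hd
  have hGsub : ∀ s' : Set T, IsArcWithImage (p a) (p b) s' → G ⊆ s' := by
    rintro s' ⟨γ', hc', hinj', h0', h1', himg'⟩
    rintro z ⟨w, hw, rfl⟩
    have hdx : dist (p a) (g w) = w := by
      have := hgiso 0 ⟨le_refl 0, le_of_lt hD⟩ w hw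
      rw [hg0] at this
      rw [this, abs_of_nonpos (by linarith [hw.1])]; ring
    have hdy : dist (g w) (p b) = D - w := by
      have := hgiso w hw D ⟨le_of_lt hD, le_refl D⟩
      rw [hgD] at this
      rw [this, abs_of_nonpos (by linarith [hw.2])]; ring
    have hzgeo : dist (p a) (g w) + dist (g w) (p b) = dist (p a) (p b) := by
      rw [hdx, hdy]; ring
    have := mid_mem_path hyp hc' h0' h1' hzgeo
    rwa [himg'] at this
  -- every arc is contained in G
  have hsubG : ∀ s' : Set T, IsArcWithImage (p a) (p b) s' → s' ⊆ G := by
    rintro s' harc'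
    obtain ⟨γ', hc', hinj', h0', h1', himg'⟩ := harc'
    haveI : CompactSpace (Set.Icc (0:ℝ) 1) := isCompact_iff_compactSpace.mp isCompact_Icc
    set f : Set.Icc (0:ℝ) 1 → T := (Set.Icc (0:ℝ) 1).restrict γ' with hf
    have hfc : Continuous f := hc'.restrict
    have hfinj : Function.Injective f := by
      rintro ⟨u, hu⟩ ⟨v, hv⟩ h
      exact Subtype.ext (hinj' hu hv h)
    have hemb := hfc.isClosedEmbedding hfinj
    have hrange : G ⊆ Set.range f := by
      intro z hz
      have : z ∈ s' := hGsub s' ⟨γ', hc', hinj', h0', h1', himg'⟩ hz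
      rw [← himg'] at this
      obtain ⟨t, ht, rfl⟩ := this
      exact ⟨⟨t, ht⟩, rfl⟩
    have hpre : IsPreconnected (f ⁻¹' G) :=
      hGconn.preimage_of_isClosedMap hfinj hemb.isClosedMap hrange
    have hval : IsPreconnected (Subtype.val '' (f ⁻¹' G)) :=
      hpre.image _ continuous_subtype_val.continuousOn
    have h0K : (0:ℝ) ∈ Subtype.val '' (f ⁻¹' G) := by
      refine ⟨⟨0, le_refl 0, zero_le_one⟩, ?_, rfl⟩
      show f _ ∈ G
      have : f ⟨0, le_refl 0, zero_le_one⟩ = p a := h0'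
      rw [this, ← hg0]
      exact ⟨0, ⟨le_refl 0, le_of_lt hD⟩, rfl⟩
    have h1K : (1:ℝ) ∈ Subtype.val '' (f ⁻¹' G) := by
      refine ⟨⟨1, zero_le_one, le_refl 1⟩, ?_, rfl⟩
      show f _ ∈ G
      have : f ⟨1, zero_le_one, le_refl 1⟩ = p b := h1'
      rw [this, ← hgD]
      exact ⟨D, ⟨le_of_lt hD, le_refl D⟩, rfl⟩
    have hIcc : Set.Icc (0:ℝ) 1 ⊆ Subtype.val '' (f ⁻¹' G) :=
      hval.Icc_subset h0K h1K
    intro z hz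
    rw [← himg'] at hz
    obtain ⟨t, ht, rfl⟩ := hz
    obtain ⟨⟨t', ht'⟩, hft', hvt'⟩ := hIcc ht
    have : t' = t := hvt'
    subst this
    exact hft'
  constructor
  · exact ⟨G, harc, fun s' hs' => Set.Subset.antisymm (hsubG s' hs') (hGsub s' hs')⟩
  · intro s hs
    refine ⟨g, hg0, hgD, hgiso, ?_⟩
    rw [Set.Subset.antisymm (hsubG s hs) (hGsub s hs)]

end Tlevel

end CactusProof

/-- The continuous cactus of a pointed compact geodesic metric space is a compact
`ℝ`-tree: there is a compact metric space `T` which is an `ℝ`-tree, together with the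
quotient map `p : E → T` realizing `d_Kac` as the distance of `T`. -/
theorem stmt11 {E : Type u} [MetricSpace E] [CompactSpace E]
    (hgeo : IsGeodesicSpace E) (ρ : E) :
    ∃ (T : Type u) (_ : MetricSpace T), CompactSpace T ∧ IsRTree T ∧
      ∃ p : E → T, Function.Surjective p ∧
        ∀ a b : E, dist (p a) (p b) = dKac ρ a b := by
  classical
  have htri := CactusProof.dKac_triangle hgeo ρ
  have hcomm := CactusProof.dKac_comm hgeo ρ
  have hself := CactusProof.dKac_self hgeo ρ
  have hnonneg := CactusProof.dKac_nonneg hgeo ρ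
  have h2d := CactusProof.dKac_le_two_dist hgeo ρ
  -- the map into bounded continuous functions
  have hlip : ∀ a : E, LipschitzWith 2 (fun b => dKac ρ a b) := by
    intro a
    apply LipschitzWith.of_dist_le_mul
    intro x y
    rw [Real.dist_eq]
    have t1 : dKac ρ a x ≤ dKac ρ a y + dKac ρ y x := htri a y x
    have t2 : dKac ρ a y ≤ dKac ρ a x + dKac ρ x y := htri a x y
    have hc : dKac ρ y x = dKac ρ x y := hcomm y x
    have hb : dKac ρ x y ≤ 2 * dist x y := h2d x y
    rw [abs_le]
    push_cast
    constructor <;> linarith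
  set F : E → BoundedContinuousFunction E ℝ := fun a =>
    BoundedContinuousFunction.mkOfCompact ⟨fun b => dKac ρ a b, (hlip a).continuous⟩ with hF
  have hFd : ∀ a b : E, dist (F a) (F b) = dKac ρ a b := by
    intro a b
    apply le_antisymm
    · apply (BoundedContinuousFunction.dist_le (hnonneg a b)).mpr
      intro x
      rw [Real.dist_eq, abs_le]
      have t1 : dKac ρ a x ≤ dKac ρ a b + dKac ρ b x := htri a b x
      have t2 : dKac ρ b x ≤ dKac ρ b a + dKac ρ a x := htri b a x
      have hc : dKac ρ b a = dKac ρ a b := hcomm b a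
      constructor <;> simp only [hF, BoundedContinuousFunction.mkOfCompact_apply,
        ContinuousMap.coe_mk] <;> linarith
    · have := BoundedContinuousFunction.dist_coe_le_dist (f := F a) (g := F b) b
      simp only [hF, BoundedContinuousFunction.mkOfCompact_apply, ContinuousMap.coe_mk] at this
      rw [Real.dist_eq, hself b, sub_zero, abs_of_nonneg (hnonneg a b)] at this
      exact this
  refine ⟨Set.range F, inferInstance, ?_, ?_, ?_⟩
  case refine_3 =>
    refine ⟨fun a => ⟨F a, a, rfl⟩, ?_, ?_⟩
    · rintro ⟨_, a, rfl⟩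
      exact ⟨a, rfl⟩
    · intro a b
      rw [Subtype.dist_eq]
      exact hFd a b
  case refine_1 =>
    have hplip : LipschitzWith 2 (fun a => (⟨F a, a, rfl⟩ : Set.range F)) := by
      apply LipschitzWith.of_dist_le_mul
      intro a b
      rw [Subtype.dist_eq]
      push_cast
      rw [hFd a b]
      exact h2d a b
    have hsurj : Function.Surjective (fun a => (⟨F a, a, rfl⟩ : Set.range F)) := by
      rintro ⟨_, a, rfl⟩
      exact ⟨a, rfl⟩
    constructor
    rw [← hsurj.range_eq]
    exact isCompact_range hplip.continuous
  case refine_2 =>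
    apply CactusProof.cactus_isRTree hgeo ρ (fun a => (⟨F a, a, rfl⟩ : Set.range F))
    · rintro ⟨_, a, rfl⟩
      exact ⟨a, rfl⟩
    · intro a b
      rw [Subtype.dist_eq]
      exact hFd a b
end

section
/- In a compact metric space, the intersection of a totally ordered (by reverse inclusion) family of nonempty closed connected sets, each of which is a connected component of the complement of an open ball B(ρ, r_i), is itself a nonempty closed connected set equal to a connected component of the complement of B(ρ, sup r_i). -/
open Set

/-- A connected component in a closed set is closed. -/
lemma aux_isClosed_connectedComponentIn {E : Type*} [TopologicalSpace E] {F : Set E}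
    (hF : IsClosed F) (x : E) : IsClosed (connectedComponentIn F x) := by
  by_cases hx : x ∈ F
  · rw [connectedComponentIn_eq_image hx]
    exact hF.isClosedMap_subtype_val _ isClosed_connectedComponent
  · rw [connectedComponentIn_eq_empty hx]
    exact isClosed_empty

/-- Directed intersection of nonempty compact closed connected sets is connected. -/
lemma aux_isConnected_iInter {E : Type*} [MetricSpace E] [CompactSpace E]
    {ι : Type*} [Nonempty ι] (C : ι → Set E) (hcl : ∀ i, IsClosed (C i))
    (hconn : ∀ i, IsConnected (C i)) (hdir : Directed (· ⊇ ·) C) :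
    IsConnected (⋂ i, C i) := by
  have hcp : ∀ i, IsCompact (C i) := fun i => (hcl i).isCompact
  have hne : (⋂ i, C i).Nonempty :=
    IsCompact.nonempty_iInter_of_directed_nonempty_isCompact_isClosed C hdir
      (fun i => (hconn i).nonempty) hcp hcl
  refine ⟨hne, isPreconnected_closed_iff.2 fun t t' ht ht' hsub hne1 hne2 => ?_⟩
  by_contra hempty
  rw [not_nonempty_iff_eq_empty] at hempty
  set K := ⋂ i, C i with hK
  -- A and B are disjoint compact sets covering K
  have hKcl : IsClosed K := isClosed_iInter hcl
  have hA : IsCompact (K ∩ t) := (hKcl.inter ht).isCompact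
  have hB : IsCompact (K ∩ t') := (hKcl.inter ht').isCompact
  have hdisj : Disjoint (K ∩ t) (K ∩ t') := by
    rw [Set.disjoint_iff_inter_eq_empty]
    rw [show K ∩ t ∩ (K ∩ t') = K ∩ (t ∩ t') by ext y; simp; tauto]
    exact hempty
  obtain ⟨u, v, hu, hv, hAu, hBv, huv⟩ := SeparatedNhds.of_isCompact_isCompact hA hB hdisj
  -- each C i \ (u ∪ v) is nonempty
  have hDne : ∀ i, (C i \ (u ∪ v)).Nonempty := by
    intro i
    by_contra hD
    rw [not_nonempty_iff_eq_empty, diff_eq_empty] at hD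
    have h1 : (C i ∩ u).Nonempty := by
      obtain ⟨y, hy⟩ := hne1
      exact ⟨y, (iInter_subset C i) hy.1, hAu ⟨hy.1, hy.2⟩⟩
    have h2 : (C i ∩ v).Nonempty := by
      obtain ⟨y, hy⟩ := hne2
      exact ⟨y, (iInter_subset C i) hy.1, hBv ⟨hy.1, hy.2⟩⟩
    obtain ⟨y, hy⟩ := (hconn i).isPreconnected u v hu hv hD h1 h2
    exact (huv.le_bot hy.2 : False)
  have hDdir : Directed (· ⊇ ·) (fun i => C i \ (u ∪ v)) := fun i j => by
    obtain ⟨k, hk1, hk2⟩ := hdir i j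
    exact ⟨k, diff_subset_diff_left hk1, diff_subset_diff_left hk2⟩
  have hDcl : ∀ i, IsClosed (C i \ (u ∪ v)) := fun i =>
    (hcl i).sdiff (hu.union hv)
  have : (⋂ i, C i \ (u ∪ v)).Nonempty :=
    IsCompact.nonempty_iInter_of_directed_nonempty_isCompact_isClosed _ hDdir hDne
      (fun i => (hDcl i).isCompact) hDcl
  obtain ⟨y, hy⟩ := this
  have hyK : y ∈ K := mem_iInter.2 fun i => (mem_iInter.1 hy i).1
  have hyn : y ∉ u ∪ v := (mem_iInter.1 hy (Classical.arbitrary ι)).2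
  have : y ∈ t ∪ t' := hsub hyK
  rcases this with h | h
  · exact hyn (Or.inl (hAu ⟨hyK, h⟩))
  · exact hyn (Or.inr (hBv ⟨hyK, h⟩))

/-- In a compact metric space, the intersection of a totally ordered (by inclusion) family
of nonempty closed connected sets, each a connected component of the complement of an open
ball `B(ρ, r i)`, is a nonempty closed connected set, equal to a connected component of the
complement of `B(ρ, sup r i)`. -/
theorem stmt12 {E : Type*} [MetricSpace E] [CompactSpace E] (ρ : E)
    {ι : Type*} [Nonempty ι] (r : ι → ℝ) (hr : ∀ i, 0 ≤ r i) (C : ι → Set E)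
    (hC : ∀ i, ∃ x ∈ C i, C i = connectedComponentIn (Metric.ball ρ (r i))ᶜ x)
    (hchain : ∀ i j, C i ⊆ C j ∨ C j ⊆ C i) :
    (⋂ i, C i).Nonempty ∧ IsClosed (⋂ i, C i) ∧ IsConnected (⋂ i, C i) ∧
      ∃ x ∈ ⋂ i, C i,
        (⋂ i, C i) = connectedComponentIn (Metric.ball ρ (⨆ i, r i))ᶜ x := by
  have hball : ∀ i, IsClosed (Metric.ball ρ (r i))ᶜ := fun i =>
    Metric.isOpen_ball.isClosed_compl
  have hCsub : ∀ i, C i ⊆ (Metric.ball ρ (r i))ᶜ := fun i => by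
    obtain ⟨x, hx, hEq⟩ := hC i
    rw [hEq]; exact connectedComponentIn_subset _ _
  have hcl : ∀ i, IsClosed (C i) := fun i => by
    obtain ⟨x, hx, hEq⟩ := hC i
    rw [hEq]; exact aux_isClosed_connectedComponentIn (hball i) x
  have hconn : ∀ i, IsConnected (C i) := fun i => by
    obtain ⟨x, hx, hEq⟩ := hC i
    rw [hEq]
    exact isConnected_connectedComponentIn_iff.2 (hCsub i hx)
  have hdir : Directed (· ⊇ ·) C := fun i j =>
    (hchain i j).elim (fun h => ⟨i, subset_rfl, h⟩) fun h => ⟨j, h, subset_rfl⟩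
  have hKconn : IsConnected (⋂ i, C i) := aux_isConnected_iInter C hcl hconn hdir
  obtain ⟨x, hxK⟩ := hKconn.nonempty
  set R := ⨆ i, r i with hR
  -- every point of the intersection is outside the big ball
  have hKout : (⋂ i, C i) ⊆ (Metric.ball ρ R)ᶜ := by
    intro y hy
    simp only [Metric.mem_ball, mem_compl_iff, not_lt]
    exact ciSup_le fun i => by
      have := hCsub i ((iInter_subset C i) hy)
      simpa [Metric.mem_ball, not_lt] using this
  have hxout : x ∈ (Metric.ball ρ R)ᶜ := hKout hxK
  have hbdd : BddAbove (Set.range r) := by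
    refine ⟨dist x ρ, ?_⟩
    rintro _ ⟨i, rfl⟩
    have := hCsub i ((iInter_subset C i) hxK)
    simpa [Metric.mem_ball, not_lt] using this
  have hsubR : ∀ i, (Metric.ball ρ R)ᶜ ⊆ (Metric.ball ρ (r i))ᶜ := fun i =>
    compl_subset_compl.2 (Metric.ball_subset_ball (le_ciSup hbdd i))
  refine ⟨hKconn.nonempty, isClosed_iInter hcl, hKconn, x, hxK, subset_antisymm ?_ ?_⟩
  · exact hKconn.isPreconnected.subset_connectedComponentIn hxK hKout
  · refine subset_iInter fun i => ?_
    obtain ⟨z, hz, hEq⟩ := hC i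
    have hxCi : x ∈ C i := (iInter_subset C i) hxK
    have hEq2 : C i = connectedComponentIn (Metric.ball ρ (r i))ᶜ x := by
      rw [hEq]; exact connectedComponentIn_eq (hEq ▸ hxCi)
    rw [hEq2]
    exact isPreconnected_connectedComponentIn.subset_connectedComponentIn
      (mem_connectedComponentIn hxout)
      ((connectedComponentIn_subset _ _).trans (hsubR i))
end

section
/- For a pointed compact geodesic metric space E, the space Kac'(E) of connected components of complements of open balls around ρ, equipped with d_{Kac'}(C, C') = h(C) + h(C') - 2h(C ∧ C'), is isometric to the continuous cactus Kac(E) via the map sending x ∈ E to the connected component of B(ρ, d(ρ,x))^c containing x. -/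
open Metric Set


/-- For `x, y ∈ E`, the height `h(C_x ∧ C_y)` of the infimum of the components `C_x`, `C_y`
in the tree `Kac'(E)`: the maximal `r ≥ 0` such that `x` and `y` lie in the same connected
component of the complement of the open ball `B(ρ, r)`. -/
noncomputable def hMeet {E : Type*} [MetricSpace E] (ρ x y : E) : ℝ :=
  sSup {r : ℝ | 0 ≤ r ∧ y ∈ connectedComponentIn (Metric.ball ρ r)ᶜ x}

lemma joinedIn_of_geodesic {E : Type*} [MetricSpace E] (hgeo : IsGeodesicSpace E)
    {S : Set E} {b c : E} (hS : ∀ w : E, dist b w ≤ dist b c → w ∈ S) :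
    JoinedIn S b c := by
  obtain ⟨γ, h0, h1, hiso⟩ := hgeo b c
  set d := dist b c with hd
  have hd0 : 0 ≤ d := dist_nonneg
  have hmem : ∀ t : unitInterval, (t : ℝ) * d ∈ Icc (0 : ℝ) d := fun t =>
    ⟨mul_nonneg t.2.1 hd0, by nlinarith [t.2.1, t.2.2]⟩
  have hcont : Continuous fun t : unitInterval => γ ((t : ℝ) * d) := by
    have hlip : ContinuousOn γ (Icc 0 d) := by
      refine (LipschitzOnWith.of_dist_le_mul (K := 1) fun s hs t ht => ?_).continuousOn
      rw [hiso s hs t ht, NNReal.coe_one, one_mul, Real.dist_eq]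
    exact hlip.comp_continuous (by continuity) hmem
  have hdistb : ∀ t : unitInterval, dist b (γ ((t : ℝ) * d)) = (t : ℝ) * d := by
    intro t
    have := hiso 0 ⟨le_refl 0, hd0⟩ ((t : ℝ) * d) (hmem t)
    rw [h0] at this
    rw [this, abs_of_nonpos (by nlinarith [t.2.1])]
    ring
  refine ⟨{ toFun := fun t => γ ((t : ℝ) * d)
            continuous_toFun := hcont
            source' := by simp [h0]
            target' := by simp [h1] }, fun t => hS _ ?_⟩
  show dist b (γ ((t : ℝ) * d)) ≤ d
  rw [hdistb t]
  nlinarith [t.2.1, t.2.2]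

lemma joinedIn_of_connectedComponentIn {E : Type*} [MetricSpace E]
    (hgeo : IsGeodesicSpace E) {ρ x y : E} {r ε : ℝ} (hε : 0 < ε)
    (hy : y ∈ connectedComponentIn (Metric.ball ρ r)ᶜ x) :
    JoinedIn {w : E | r - ε ≤ dist ρ w} x y := by
  set K := (Metric.ball ρ r)ᶜ with hK
  have hx : x ∈ K := connectedComponentIn_nonempty_iff.mp ⟨y, hy⟩
  have hKd : ∀ w ∈ K, r ≤ dist ρ w := by
    intro w hw
    rw [dist_comm]
    exact le_of_not_gt fun h => hw (mem_ball.mpr h)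
  set R : E → E → Prop := fun a b => b ∈ K ∧ dist a b < ε with hR
  set U : Set E := {z | Relation.ReflTransGen R x z} with hU
  have hUK : ∀ z ∈ U, z ∈ K := by
    intro z hz
    induction hz with
    | refl => exact hx
    | tail _ h _ => exact h.1
  -- y is reachable by ε-chains
  have hyU : y ∈ U := by
    set u : Set E := ⋃ z ∈ U, Metric.ball z (ε / 2) with hu
    set v : Set E := ⋃ z ∈ K \ U, Metric.ball z (ε / 2) with hv
    have hyu : y ∈ u := by
      have huo : IsOpen u := isOpen_biUnion fun _ _ => isOpen_ball
      have hvo : IsOpen v := isOpen_biUnion fun _ _ => isOpen_ball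
      have hdisj : Disjoint u v := by
        rw [Set.disjoint_left]
        rintro w hwu hwv
        obtain ⟨z, hzU, hwz⟩ := mem_iUnion₂.mp hwu
        obtain ⟨z', hz', hwz'⟩ := mem_iUnion₂.mp hwv
        have : dist z z' < ε := by
          rw [mem_ball] at hwz hwz'
          have h3 := dist_triangle z w z'
          linarith [dist_comm z w]
        exact hz'.2 (Relation.ReflTransGen.tail hzU ⟨hz'.1, this⟩)
      have hcov : connectedComponentIn K x ⊆ u ∪ v := by
        intro w hw
        have hwK : w ∈ K := connectedComponentIn_subset K x hw
        by_cases hwU : w ∈ U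
        · exact Or.inl (mem_biUnion hwU (mem_ball_self (half_pos hε)))
        · exact Or.inr (mem_biUnion ⟨hwK, hwU⟩ (mem_ball_self (half_pos hε)))
      have hsub : connectedComponentIn K x ⊆ u :=
        IsPreconnected.subset_left_of_subset_union huo hvo hdisj hcov
          ⟨x, mem_connectedComponentIn hx,
            mem_biUnion (show x ∈ U from Relation.ReflTransGen.refl)
              (mem_ball_self (half_pos hε))⟩
          isPreconnected_connectedComponentIn
      exact hsub hy
    obtain ⟨z, hzU, hyz⟩ := mem_iUnion₂.mp hyu
    exact Relation.ReflTransGen.tail hzU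
      ⟨connectedComponentIn_subset K x hy, by
        rw [mem_ball, dist_comm] at hyz; linarith⟩
  -- build a path along the chain
  have : ∀ z ∈ U, JoinedIn {w : E | r - ε ≤ dist ρ w} x z := by
    intro z hz
    induction hz with
    | refl => exact JoinedIn.refl (show r - ε ≤ dist ρ x by linarith [hKd x hx])
    | @tail b c hxb hbc ih =>
      refine ih.trans (joinedIn_of_geodesic hgeo fun w hw => ?_)
      have h1 : r ≤ dist ρ b := hKd b (hUK b hxb)
      have h2 : dist ρ b ≤ dist ρ w + dist w b := dist_triangle ρ w b
      rw [dist_comm w b] at h2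
      show r - ε ≤ dist ρ w
      have := hbc.2
      linarith
  exact this y hyU

lemma mem_curveSet_of_joinedIn {E : Type*} [MetricSpace E] {S : Set E} {ρ x y : E} {c : ℝ}
    (h : JoinedIn S x y) (hc : ∀ w ∈ S, c ≤ dist ρ w) :
    ∃ m ∈ {m : ℝ | ∃ γ : ℝ → E, ContinuousOn γ (Set.Icc 0 1) ∧ γ 0 = x ∧ γ 1 = y ∧
      m = ⨅ t : Set.Icc (0 : ℝ) 1, dist ρ (γ t)}, c ≤ m := by
  obtain ⟨p, hp⟩ := h
  refine ⟨_, ⟨fun t => p (Set.projIcc 0 1 zero_le_one t),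
    (p.continuous.comp continuous_projIcc).continuousOn, ?_, ?_, rfl⟩, ?_⟩
  · show p (Set.projIcc 0 1 zero_le_one 0) = x
    rw [Set.projIcc_left]
    exact p.source
  · show p (Set.projIcc 0 1 zero_le_one 1) = y
    rw [Set.projIcc_right]
    exact p.target
  · exact le_ciInf fun t => hc _ (hp _)

/-- The space `Kac'(E)` of connected components of complements of open balls centered at
`ρ`, with `d_Kac'(C, C') = h(C) + h(C') - 2 h(C ∧ C')` where `h(C) = d(ρ, C)`, is isometric
to `Kac(E)` via the map sending `x` to the component `C_x` of `B(ρ, d(ρ,x))ᶜ` containing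
`x`: that map is onto `Kac'(E)` and sends `d_Kac` to `d_Kac'`. -/
theorem stmt13 {E : Type*} [MetricSpace E] [CompactSpace E]
    (hgeo : IsGeodesicSpace E) (ρ : E) :
    (∀ x y : E,
      Metric.infDist ρ (connectedComponentIn (Metric.ball ρ (dist ρ x))ᶜ x) +
        Metric.infDist ρ (connectedComponentIn (Metric.ball ρ (dist ρ y))ᶜ y) -
        2 * hMeet ρ x y = dKac ρ x y) ∧
    (∀ r : ℝ, 0 ≤ r → ∀ z ∈ (Metric.ball ρ r)ᶜ,
      ∃ x : E, connectedComponentIn (Metric.ball ρ (dist ρ x))ᶜ x =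
        connectedComponentIn (Metric.ball ρ r)ᶜ z) := by
  constructor
  · intro x y
    -- infDist of the component equals dist ρ x
    have hinf : ∀ a : E,
        Metric.infDist ρ (connectedComponentIn (Metric.ball ρ (dist ρ a))ᶜ a) = dist ρ a := by
      intro a
      have ha : a ∈ (Metric.ball ρ (dist ρ a))ᶜ := by
        simp [mem_ball, dist_comm]
      refine le_antisymm (Metric.infDist_le_dist_of_mem (mem_connectedComponentIn ha)) ?_
      by_contra h
      push_neg at h
      obtain ⟨w, hw, hwd⟩ :=
        (Metric.infDist_lt_iff ⟨a, mem_connectedComponentIn ha⟩).mp h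
      exact connectedComponentIn_subset _ _ hw (mem_ball.mpr (by rwa [dist_comm]))
    set A : Set ℝ := {r : ℝ | 0 ≤ r ∧ y ∈ connectedComponentIn (Metric.ball ρ r)ᶜ x} with hA
    set B : Set ℝ := {m : ℝ | ∃ γ : ℝ → E, ContinuousOn γ (Set.Icc 0 1) ∧ γ 0 = x ∧ γ 1 = y ∧
      m = ⨅ t : Set.Icc (0 : ℝ) 1, dist ρ (γ t)} with hB
    have hioo : Nonempty (Set.Icc (0:ℝ) 1) := ⟨⟨0, le_refl 0, zero_le_one⟩⟩
    have hbdd : ∀ γ : ℝ → E, BddBelow (Set.range fun t : Set.Icc (0:ℝ) 1 => dist ρ (γ t)) :=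
      fun γ => ⟨0, by rintro _ ⟨t, rfl⟩; exact dist_nonneg⟩
    have hBub : ∀ m ∈ B, m ≤ dist ρ x := by
      rintro m ⟨γ, hγc, hγ0, hγ1, rfl⟩
      have := ciInf_le (hbdd γ) (⟨0, le_refl 0, zero_le_one⟩ : Set.Icc (0:ℝ) 1)
      simpa [hγ0] using this
    have hBbdd : BddAbove B := ⟨dist ρ x, hBub⟩
    have hjoined : JoinedIn (Set.univ : Set E) x y :=
      joinedIn_of_geodesic hgeo fun w _ => Set.mem_univ w
    have hBne : B.Nonempty := by
      obtain ⟨m, hm, -⟩ := mem_curveSet_of_joinedIn (ρ := ρ) (c := (0:ℝ)) hjoined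
        (fun w _ => dist_nonneg)
      exact ⟨m, hm⟩
    have hAne : A.Nonempty := by
      refine ⟨0, le_refl 0, ?_⟩
      rw [Metric.ball_zero, compl_empty, connectedComponentIn_univ]
      exact pathComponent_subset_component x (joinedIn_univ.mp hjoined)
    have hAbdd : BddAbove A := by
      refine ⟨dist ρ x, ?_⟩
      rintro r ⟨hr0, hyr⟩
      have hx : x ∈ (Metric.ball ρ r)ᶜ := connectedComponentIn_nonempty_iff.mp ⟨y, hyr⟩
      rw [dist_comm]
      exact le_of_not_gt fun h => hx (mem_ball.mpr h)
    have hkey : hMeet ρ x y = sSup B := by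
      rw [hMeet, ← hA]
      refine le_antisymm (csSup_le hAne ?_) (csSup_le hBne ?_)
      · rintro r ⟨hr0, hyr⟩
        refine le_of_forall_sub_le fun ε hε => ?_
        obtain ⟨m, hm, hcm⟩ := mem_curveSet_of_joinedIn (ρ := ρ) (c := r - ε)
          (joinedIn_of_connectedComponentIn hgeo hε hyr) (fun w hw => hw)
        exact le_trans hcm (le_csSup hBbdd hm)
      · rintro m ⟨γ, hγc, hγ0, hγ1, rfl⟩
        set m := ⨅ t : Set.Icc (0:ℝ) 1, dist ρ (γ t) with hm
        refine le_csSup hAbdd ⟨le_ciInf fun t => dist_nonneg, ?_⟩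
        have himg : γ '' Set.Icc 0 1 ⊆ (Metric.ball ρ m)ᶜ := by
          rintro _ ⟨t, ht, rfl⟩
          have : m ≤ dist ρ (γ t) := ciInf_le (hbdd γ) ⟨t, ht⟩
          simp only [mem_compl_iff, mem_ball]
          rw [dist_comm]
          exact not_lt.mpr this
        have hpre : IsPreconnected (γ '' Set.Icc 0 1) := (isPreconnected_Icc).image γ hγc
        have hxs : x ∈ γ '' Set.Icc 0 1 := ⟨0, ⟨le_refl 0, zero_le_one⟩, hγ0⟩
        exact hpre.subset_connectedComponentIn hxs himg ⟨1, ⟨zero_le_one, le_refl 1⟩, hγ1⟩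
    rw [hinf x, hinf y, dKac, hkey]
  · intro r hr z hz
    set K := (Metric.ball ρ r)ᶜ with hK
    set C := connectedComponentIn K z with hC
    have hKc : IsClosed K := Metric.isOpen_ball.isClosed_compl
    have hCc : IsClosed C := by
      have h1 : closure C ⊆ C :=
        (isPreconnected_connectedComponentIn.closure).subset_connectedComponentIn
          (subset_closure (mem_connectedComponentIn hz))
          (closure_minimal (connectedComponentIn_subset K z) hKc)
      exact isClosed_of_closure_subset h1
    obtain ⟨x, hxC, hid⟩ := hCc.isCompact.exists_infDist_eq_dist
      ⟨z, mem_connectedComponentIn hz⟩ ρ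
    have hmin : ∀ w ∈ C, dist ρ x ≤ dist ρ w := fun w hw =>
      hid ▸ Metric.infDist_le_dist_of_mem hw
    have hCsub : C ⊆ (Metric.ball ρ (dist ρ x))ᶜ := by
      intro w hw
      simp only [mem_compl_iff, mem_ball]
      rw [dist_comm]
      exact not_lt.mpr (hmin w hw)
    have hxmem : x ∈ (Metric.ball ρ (dist ρ x))ᶜ := hCsub hxC
    have hrx : r ≤ dist ρ x := by
      have := connectedComponentIn_subset K z hxC
      rw [dist_comm]
      exact le_of_not_gt fun h => this (mem_ball.mpr h)
    refine ⟨x, Subset.antisymm ?_ ?_⟩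
    · have h1 : connectedComponentIn (Metric.ball ρ (dist ρ x))ᶜ x ⊆ K :=
        (connectedComponentIn_subset _ _).trans
          (compl_subset_compl.mpr (Metric.ball_subset_ball hrx))
      have h2 : connectedComponentIn (Metric.ball ρ (dist ρ x))ᶜ x ⊆ connectedComponentIn K x :=
        isPreconnected_connectedComponentIn.subset_connectedComponentIn
          (mem_connectedComponentIn hxmem) h1
      rwa [← connectedComponentIn_eq hxC] at h2
    · exact isPreconnected_connectedComponentIn.subset_connectedComponentIn hxC hCsub
end
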